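/- arXiv:2312.03915 — 9 statements merged into one kernel-verified Lean document; each statement's English description precedes it below -/
import Mathlib

section
/- For every σ > 0 and every d > 0 there exist δ₋, δ₊ ∈ (0,1), depending only on σ and d, such that for all q ≥ σ and all x ≥ d one has E[ 1_{τ⁻₀(x) < ∞} · exp(−q · τ⁻₀(x)) ] ≤ δ₋, and for all q ≥ σ and all x ≤ −d one has E[ 1_{τ⁺₀(x) < ∞} · exp(−q · τ⁺₀(x)) ] ≤ δ₊. (In words: starting at distance at least d from a barrier, the expected discount factor accumulated until the process crosses the barrier is bounded away from 1, uniformly in the discount rate q ≥ σ.) -/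
open MeasureTheory ProbabilityTheory Set
open scoped ENNReal

/-- First entrance time of `x + X_t` into `[h, ∞)`, with `inf ∅ = ∞`. -/
noncomputable def tauPlus {Ω : Type*} (X : ℝ → Ω → ℝ) (x h : ℝ) (ω : Ω) : ℝ≥0∞ :=
  sInf ((fun s : ℝ => ENNReal.ofReal s) '' {s : ℝ | 0 ≤ s ∧ h ≤ x + X s ω})

/-- First entrance time of `x + X_t` into `(-∞, h]`, with `inf ∅ = ∞`. -/
noncomputable def tauMinus {Ω : Type*} (X : ℝ → Ω → ℝ) (x h : ℝ) (ω : Ω) : ℝ≥0∞ :=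
  sInf ((fun s : ℝ => ENNReal.ofReal s) '' {s : ℝ | 0 ≤ s ∧ x + X s ω ≤ h})

/-- The discount factor `1_{t<∞} e^{-q t}`. -/
noncomputable def levyDiscount (q : ℝ) (t : ℝ≥0∞) : ℝ :=
  if t = ⊤ then 0 else Real.exp (-(q * t.toReal))

lemma levyDiscount_nonneg (q : ℝ) (t : ℝ≥0∞) : 0 ≤ levyDiscount q t := by
  unfold levyDiscount
  split
  · exact le_refl 0
  · exact (Real.exp_pos _).le

lemma levyDiscount_le_one {q : ℝ} (hq : 0 ≤ q) (t : ℝ≥0∞) : levyDiscount q t ≤ 1 := by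
  unfold levyDiscount
  split
  · norm_num
  · rw [Real.exp_le_one_iff]
    have : 0 ≤ q * t.toReal := mul_nonneg hq ENNReal.toReal_nonneg
    linarith

lemma aux_tauMinus {Ω : Type*} [MeasurableSpace Ω] (P : Measure Ω) [IsProbabilityMeasure P]
    (X : ℝ → Ω → ℝ)
    (hMeas : ∀ t : ℝ, Measurable (X t))
    (hX0 : ∀ᵐ ω ∂P, X 0 ω = 0)
    (hrc : ∀ ω : Ω, ∀ t : ℝ, ContinuousWithinAt (fun s => X s ω) (Set.Ici t) t)
    {σ d : ℝ} (hσ : 0 < σ) (hd : 0 < d) :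
    ∃ δ : ℝ, δ ∈ Set.Ioo (0:ℝ) 1 ∧
      ∀ q ≥ σ, ∀ x ≥ d, (∫ ω, levyDiscount q (tauMinus X x 0 ω) ∂P) ≤ δ := by
  -- the bad events
  set D : ℕ → Set Ω := fun n =>
    ⋃ r : ℚ, {ω | 0 ≤ (r:ℝ) ∧ (r:ℝ) ≤ 1/((n:ℝ)+1) ∧ X (r:ℝ) ω < -(d/2)} with hD
  have hDmeas : ∀ n, MeasurableSet (D n) := by
    intro n
    apply MeasurableSet.iUnion
    intro r
    have : {ω | 0 ≤ (r:ℝ) ∧ (r:ℝ) ≤ 1/((n:ℝ)+1) ∧ X (r:ℝ) ω < -(d/2)}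
        = {ω | 0 ≤ (r:ℝ)} ∩ ({ω | (r:ℝ) ≤ 1/((n:ℝ)+1)} ∩ (X (r:ℝ)) ⁻¹' (Set.Iio (-(d/2)))) := by
      ext ω; simp [Set.mem_setOf_eq, Set.mem_inter_iff, and_assoc]
    rw [this]
    exact (MeasurableSet.const _).inter
      ((MeasurableSet.const _).inter ((hMeas _) measurableSet_Iio))
  have hAnti : Antitone D := by
    intro m n hmn ω hω
    simp only [hD, Set.mem_iUnion, Set.mem_setOf_eq] at hω ⊢
    obtain ⟨r, h1, h2, h3⟩ := hω
    refine ⟨r, h1, le_trans h2 ?_, h3⟩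
    apply one_div_le_one_div_of_le
    · positivity
    · have : (m:ℝ) ≤ (n:ℝ) := Nat.cast_le.mpr hmn
      linarith
  have hInter : (⋂ n, D n) ⊆ {ω | ¬ X 0 ω = 0} := by
    intro ω hω
    simp only [Set.mem_setOf_eq]
    intro hω0
    have hc : Filter.Tendsto (fun s => X s ω) (nhdsWithin 0 (Set.Ici 0)) (nhds 0) := by
      have := hrc ω 0
      rwa [ContinuousWithinAt, hω0] at this
    have hev : (fun s => X s ω) ⁻¹' (Set.Ioi (-(d/2))) ∈ nhdsWithin 0 (Set.Ici 0) :=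
      hc (Ioi_mem_nhds (by linarith))
    rw [Metric.mem_nhdsWithin_iff] at hev
    obtain ⟨η, hη, hball⟩ := hev
    obtain ⟨n, hn⟩ := exists_nat_one_div_lt hη
    have hωn := Set.mem_iInter.mp hω n
    simp only [hD, Set.mem_iUnion, Set.mem_setOf_eq] at hωn
    obtain ⟨r, h1, h2, h3⟩ := hωn
    have hrball : (r:ℝ) ∈ Metric.ball (0:ℝ) η ∩ Set.Ici 0 := by
      constructor
      · rw [Metric.mem_ball, Real.dist_eq, sub_zero, abs_of_nonneg h1]
        exact lt_of_le_of_lt h2 hn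
      · exact h1
    have := hball hrball
    simp only [Set.mem_preimage, Set.mem_Ioi] at this
    linarith
  have hnull : P (⋂ n, D n) = 0 :=
    measure_mono_null hInter (ae_iff.mp hX0)
  have htend : Filter.Tendsto (fun n => P (D n)) Filter.atTop (nhds 0) := by
    have := MeasureTheory.tendsto_measure_iInter_atTop
      (μ := P) (s := D) (fun n => (hDmeas n).nullMeasurableSet) hAnti
      ⟨0, measure_ne_top P _⟩
    rwa [hnull] at this
  have hhalf : ∀ᶠ n in Filter.atTop, P (D n) < 1/2 :=
    htend.eventually_lt_const (by norm_num)
  obtain ⟨n, hn⟩ := hhalf.exists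
  set ε : ℝ := 1/((n:ℝ)+1) with hε
  have hεpos : 0 < ε := by positivity
  set c : ℝ := Real.exp (-(σ * ε)) with hcdef
  have hc0 : 0 < c := Real.exp_pos _
  have hc1 : c < 1 := by
    rw [hcdef, Real.exp_lt_one_iff]
    nlinarith
  refine ⟨(1 + c)/2, ⟨by linarith, by linarith⟩, ?_⟩
  intro q hq x hx
  have hq0 : 0 < q := lt_of_lt_of_le hσ hq
  -- the dominating function
  set g : Ω → ℝ := fun ω => c + (D n).indicator (fun _ => 1 - c) ω with hgdef
  have hg_int : Integrable g P :=
    (integrable_const c).add ((integrable_const (1-c)).indicator (hDmeas n))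
  have hfg : ∀ ω, levyDiscount q (tauMinus X x 0 ω) ≤ g ω := by
    intro ω
    by_cases hω : ω ∈ D n
    · have : g ω = 1 := by
        rw [hgdef]; simp only [Set.indicator_of_mem hω]; ring
      rw [this]
      exact levyDiscount_le_one hq0.le _
    · have hgc : g ω = c := by
        rw [hgdef]; simp only [Set.indicator_of_notMem hω]; ring
      rw [hgc]
      by_cases htop : tauMinus X x 0 ω = ⊤
      · unfold levyDiscount; rw [if_pos htop]; exact hc0.le
      · have hτε : ENNReal.ofReal ε ≤ tauMinus X x 0 ω := by
          by_contra hcon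
          push_neg at hcon
          rw [tauMinus, sInf_lt_iff] at hcon
          obtain ⟨a, ha, halt⟩ := hcon
          obtain ⟨s, ⟨hs0, hsx⟩, rfl⟩ := ha
          have hsε : s < ε :=
            (ENNReal.ofReal_lt_ofReal_iff_of_nonneg hs0).mp halt
          have hXs : X s ω < -(d/2) := by linarith
          have hcs : Filter.Tendsto (fun u => X u ω) (nhdsWithin s (Set.Ici s))
              (nhds (X s ω)) := hrc ω s
          have hev : (fun u => X u ω) ⁻¹' (Set.Iio (-(d/2))) ∈ nhdsWithin s (Set.Ici s) :=
            hcs (Iio_mem_nhds hXs)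
          rw [Metric.mem_nhdsWithin_iff] at hev
          obtain ⟨η, hη, hball⟩ := hev
          obtain ⟨r, hr1, hr2⟩ := exists_rat_btwn (lt_min (by linarith : s < s + η) hsε)
          have hr2a : (r:ℝ) < s + η := lt_of_lt_of_le hr2 (min_le_left _ _)
          have hr2b : (r:ℝ) < ε := lt_of_lt_of_le hr2 (min_le_right _ _)
          have hXr : X (r:ℝ) ω < -(d/2) := by
            have : (r:ℝ) ∈ Metric.ball s η ∩ Set.Ici s := by
              constructor
              · rw [Metric.mem_ball, Real.dist_eq, abs_of_nonneg (by linarith)]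
                linarith
              · exact le_of_lt hr1
            exact hball this
          apply hω
          simp only [hD, Set.mem_iUnion, Set.mem_setOf_eq]
          exact ⟨r, by linarith, by linarith, hXr⟩
        have htR : ε ≤ (tauMinus X x 0 ω).toReal :=
          (ENNReal.ofReal_le_iff_le_toReal htop).mp hτε
        unfold levyDiscount
        rw [if_neg htop, hcdef]
        apply Real.exp_le_exp.mpr
        apply neg_le_neg
        exact mul_le_mul hq htR hεpos.le hq0.le
  calc (∫ ω, levyDiscount q (tauMinus X x 0 ω) ∂P)
      ≤ ∫ ω, g ω ∂P := by
        apply integral_mono_of_nonneg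
        · exact Filter.Eventually.of_forall fun ω => levyDiscount_nonneg _ _
        · exact hg_int
        · exact Filter.Eventually.of_forall hfg
    _ = c + (1 - c) * (P (D n)).toReal := by
        rw [hgdef, integral_add (integrable_const c)
          ((integrable_const (1-c)).indicator (hDmeas n))]
        rw [integral_const, integral_indicator_const _ (hDmeas n)]
        simp [measure_univ, mul_comm, measureReal_def]
    _ ≤ (1 + c)/2 := by
        have hple : (P (D n)).toReal ≤ 1/2 := by
          have h1 : (P (D n)).toReal ≤ ((1:ℝ≥0∞)/2).toReal :=
            ENNReal.toReal_mono (by norm_num) hn.le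
          simpa using h1
        have hpnn : 0 ≤ (P (D n)).toReal := ENNReal.toReal_nonneg
        nlinarith

theorem expected_discount_bounded_away_from_one
    {Ω : Type*} [MeasurableSpace Ω] (P : Measure Ω) [IsProbabilityMeasure P]
    (X : ℝ → Ω → ℝ)
    (hMeas : ∀ t : ℝ, Measurable (X t))
    (hX0 : ∀ᵐ ω ∂P, X 0 ω = 0)
    (hrc : ∀ ω : Ω, ∀ t : ℝ, ContinuousWithinAt (fun s => X s ω) (Set.Ici t) t)
    (hIndep : ∀ (n : ℕ) (t : Fin (n + 1) → ℝ), Monotone t → 0 ≤ t 0 →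
      iIndepFun
        (fun i : Fin n => fun ω => X (t i.succ) ω - X (t i.castSucc) ω) P)
    (hStat : ∀ s t : ℝ, 0 ≤ s → 0 ≤ t →
      Measure.map (fun ω => X (t + s) ω - X s ω) P = Measure.map (X t) P) :
    ∀ σ > (0 : ℝ), ∀ d > (0 : ℝ), ∃ δm δp : ℝ,
      δm ∈ Set.Ioo (0 : ℝ) 1 ∧ δp ∈ Set.Ioo (0 : ℝ) 1 ∧
      (∀ q ≥ σ, ∀ x ≥ d, (∫ ω, levyDiscount q (tauMinus X x 0 ω) ∂P) ≤ δm) ∧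
      (∀ q ≥ σ, ∀ x ≤ -d, (∫ ω, levyDiscount q (tauPlus X x 0 ω) ∂P) ≤ δp) := by
  intro σ hσ d hd
  obtain ⟨δm, hδm, hboundm⟩ := aux_tauMinus P X hMeas hX0 hrc hσ hd
  -- apply the same lemma to -X for the upward crossing
  set Y : ℝ → Ω → ℝ := fun t ω => -(X t ω) with hYdef
  have hYMeas : ∀ t : ℝ, Measurable (Y t) := fun t => (hMeas t).neg
  have hY0 : ∀ᵐ ω ∂P, Y 0 ω = 0 := by
    filter_upwards [hX0] with ω hω
    simp [hYdef, hω]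
  have hYrc : ∀ ω : Ω, ∀ t : ℝ, ContinuousWithinAt (fun s => Y s ω) (Set.Ici t) t :=
    fun ω t => (hrc ω t).neg
  obtain ⟨δp, hδp, hboundp⟩ := aux_tauMinus P Y hYMeas hY0 hYrc hσ hd
  have hτeq : ∀ (x : ℝ) (ω : Ω), tauPlus X x 0 ω = tauMinus Y (-x) 0 ω := by
    intro x ω
    unfold tauPlus tauMinus
    have hs : {s : ℝ | 0 ≤ s ∧ (0:ℝ) ≤ x + X s ω} = {s : ℝ | 0 ≤ s ∧ (-x) + Y s ω ≤ 0} := by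
      ext s
      simp only [Set.mem_setOf_eq, hYdef]
      constructor
      · rintro ⟨h1, h2⟩; exact ⟨h1, by linarith⟩
      · rintro ⟨h1, h2⟩; exact ⟨h1, by linarith⟩
    rw [hs]
  refine ⟨δm, δp, hδm, hδp, hboundm, ?_⟩
  intro q hq x hx
  have : (∫ ω, levyDiscount q (tauPlus X x 0 ω) ∂P)
      = ∫ ω, levyDiscount q (tauMinus Y (-x) 0 ω) ∂P := by
    congr 1
    ext ω
    rw [hτeq]
  rw [this]
  exact hboundp q hq (-x) (by linarith)
end

section
/- Let ν ∈ (0,1), λ > 0, and ξ ∈ ℂ with Im ξ > −λ. Then the integral ∫_0^∞ (e^{iξx} − 1) e^{−λx} x^{−ν−1} dx converges absolutely and equals Γ(−ν) · ( (λ − iξ)^ν − λ^ν ), where z^ν denotes the principal branch of the complex power (well defined since Re(λ − iξ) = λ + Im ξ > 0) and Γ(−ν) is the value of the Gamma function at −ν. -/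
open MeasureTheory Complex Set Filter
open scoped Real Topology NNReal

/-- Integrability of `x ^ r * exp (-(c * x))` on `(0, ∞)` for `r > -1`, `c > 0`. -/
lemma kobol_aux_int_real {c r : ℝ} (hc : 0 < c) (hr : -1 < r) :
    IntegrableOn (fun x : ℝ => x ^ r * Real.exp (-(c * x))) (Set.Ioi 0) := by
  have h := Real.GammaIntegral_convergent (by linarith : (0:ℝ) < r + 1)
  rw [← mul_zero c, ← integrableOn_Ioi_comp_mul_left_iff _ _ hc] at h
  have h2 : IntegrableOn (fun x : ℝ => c ^ r * (x ^ r * Real.exp (-(c * x)))) (Set.Ioi 0) := by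
    refine IntegrableOn.congr_fun h (fun x hx => ?_) measurableSet_Ioi
    rw [mem_Ioi] at hx
    rw [add_sub_cancel_right, Real.mul_rpow hc.le hx.le]
    ring
  refine IntegrableOn.congr_fun ((h2 : IntegrableOn _ _ _).const_mul (c ^ r)⁻¹)
    (fun x hx => ?_) measurableSet_Ioi
  have hcr : (0:ℝ) < c ^ r := Real.rpow_pos_of_pos hc r
  field_simp

lemma kobol_contOn {a : ℂ} (r : ℝ) :
    ContinuousOn (fun x : ℝ => ((x ^ r : ℝ) : ℂ) * Complex.exp (-a * x)) (Set.Ioi 0) := by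
  apply ContinuousOn.mul
  · exact Complex.continuous_ofReal.comp_continuousOn
      (fun x hx => (Real.continuousAt_rpow_const x r (Or.inl (ne_of_gt hx))).continuousWithinAt)
  · exact (Complex.continuous_exp.comp
      (continuous_const.mul Complex.continuous_ofReal)).continuousOn

lemma kobol_norm_eq {a : ℂ} {x : ℝ} (hx : 0 ≤ x) (r : ℝ) :
    ‖((x ^ r : ℝ) : ℂ) * Complex.exp (-a * x)‖ = x ^ r * Real.exp (-(a.re * x)) := by
  rw [norm_mul, Complex.norm_real, Real.norm_eq_abs, _root_.abs_of_nonneg (Real.rpow_nonneg hx r),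
    Complex.norm_exp]
  congr 2
  simp [Complex.mul_re]

/-- Integrability of the complex version. -/
lemma kobol_aux_int_cplx {a : ℂ} (ha : 0 < a.re) {r : ℝ} (hr : -1 < r) :
    IntegrableOn (fun x : ℝ => ((x ^ r : ℝ) : ℂ) * Complex.exp (-a * x)) (Set.Ioi 0) := by
  refine (kobol_aux_int_real ha hr).mono' ((kobol_contOn r).aestronglyMeasurable measurableSet_Ioi) ?_
  filter_upwards [ae_restrict_mem measurableSet_Ioi] with x hx
  rw [mem_Ioi] at hx
  rw [kobol_norm_eq hx.le r]

lemma kobol_tendsto_top {a : ℂ} (ha : 0 < a.re) (r : ℝ) :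
    Tendsto (fun x : ℝ => ((x ^ r : ℝ) : ℂ) * Complex.exp (-a * x)) atTop (𝓝 0) := by
  apply squeeze_zero_norm' (a := fun x : ℝ => x ^ r * Real.exp (-(a.re * x)))
  · filter_upwards [eventually_ge_atTop (0:ℝ)] with x hx
    rw [kobol_norm_eq hx r]
  · simpa [neg_mul] using tendsto_rpow_mul_exp_neg_mul_atTop_nhds_zero r a.re ha

lemma kobol_hasDerivAt_cexp (a : ℂ) (x : ℝ) :
    HasDerivAt (fun x : ℝ => Complex.exp (-a * x)) (-a * Complex.exp (-a * x)) x := by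
  have h : HasDerivAt (fun x : ℝ => -a * (x : ℂ)) (-a) x := by
    simpa using ((hasDerivAt_id x).ofReal_comp).const_mul (-a)
  simpa [mul_comm] using h.cexp

lemma kobol_hasDerivAt_rpow {r : ℝ} {x : ℝ} (hx : 0 < x) :
    HasDerivAt (fun x : ℝ => ((x ^ r : ℝ) : ℂ)) ((r * x ^ (r - 1) : ℝ) : ℂ) x :=
  (Real.hasDerivAt_rpow_const (Or.inl hx.ne')).ofReal_comp

/-- Integration by parts recurrence for the complex Gamma-type integral. -/
lemma kobol_rec {a : ℂ} (ha : 0 < a.re) {s : ℝ} (hs : 0 < s) :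
    a * ∫ x in Set.Ioi (0:ℝ), ((x ^ s : ℝ) : ℂ) * Complex.exp (-a * x) =
      s * ∫ x in Set.Ioi (0:ℝ), ((x ^ (s - 1) : ℝ) : ℂ) * Complex.exp (-a * x) := by
  have ha' : a ≠ 0 := fun h => by simp [h] at ha
  set g : ℝ → ℂ := fun x => ((x ^ s : ℝ) : ℂ) * Complex.exp (-a * x) with hg
  set g' : ℝ → ℂ := fun x =>
    (s : ℂ) * (((x ^ (s - 1) : ℝ) : ℂ) * Complex.exp (-a * x)) +
      (-a) * (((x ^ s : ℝ) : ℂ) * Complex.exp (-a * x)) with hg'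
  have hderiv : ∀ x ∈ Set.Ioi (0:ℝ), HasDerivAt g (g' x) x := by
    intro x hx
    rw [mem_Ioi] at hx
    have := (kobol_hasDerivAt_rpow (r := s) hx).mul (kobol_hasDerivAt_cexp a x)
    refine this.congr_deriv ?_
    push_cast
    ring
  have hint : IntegrableOn g' (Set.Ioi (0:ℝ)) :=
    ((kobol_aux_int_cplx ha (by linarith)).const_mul _).add
      ((kobol_aux_int_cplx ha (by linarith)).const_mul _)
  have hcont : ContinuousWithinAt g (Set.Ici (0:ℝ)) 0 := by
    have h0 : g 0 = 0 := by simp [hg, Real.zero_rpow hs.ne']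
    rw [ContinuousWithinAt, h0]
    apply squeeze_zero_norm' (a := fun x : ℝ => x ^ s * Real.exp (-(a.re * x)))
    · filter_upwards [eventually_mem_nhdsWithin] with x hx
      rw [kobol_norm_eq hx s]
    · have h : ContinuousWithinAt (fun x : ℝ => x ^ s * Real.exp (-(a.re * x)))
        (Set.Ici (0:ℝ)) 0 :=
        ((Real.continuousAt_rpow_const 0 s (Or.inr hs.le)).mul
          (Real.continuous_exp.continuousAt.comp (by fun_prop))).continuousWithinAt
      rw [ContinuousWithinAt] at h
      simpa [Real.zero_rpow hs.ne'] using h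
  have htop : Tendsto g atTop (𝓝 0) := kobol_tendsto_top ha s
  have key := integral_Ioi_of_hasDerivAt_of_tendsto hcont hderiv hint htop
  have h0 : g 0 = 0 := by simp [hg, Real.zero_rpow hs.ne']
  rw [h0, sub_zero] at key
  have hsplit : ∫ x in Set.Ioi (0:ℝ), g' x =
      (s : ℂ) * (∫ x in Set.Ioi (0:ℝ), ((x ^ (s - 1) : ℝ) : ℂ) * Complex.exp (-a * x)) +
      (-a) * ∫ x in Set.Ioi (0:ℝ), ((x ^ s : ℝ) : ℂ) * Complex.exp (-a * x) := by
    rw [hg']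
    rw [integral_add ((kobol_aux_int_cplx ha (by linarith)).const_mul _)
      ((kobol_aux_int_cplx ha (by linarith)).const_mul _), integral_const_mul, integral_const_mul]
  rw [key] at hsplit
  have := hsplit.symm
  linear_combination -this

/-- The Gamma integral with complex exponential rate `a`, `Re a > 0`. -/
lemma kobol_gammaA {s : ℝ} (hs : 0 < s) {a : ℂ} (ha : 0 < a.re) :
    (∫ x in Set.Ioi (0:ℝ), ((x ^ (s - 1) : ℝ) : ℂ) * Complex.exp (-a * x)) * a ^ (s : ℂ) =
      (Real.Gamma s : ℂ) := by
  set A : ℝ → ℂ := fun t => (a.re : ℂ) + (t : ℂ) * (a.im : ℂ) * Complex.I with hA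
  have hAre : ∀ t, (A t).re = a.re := by intro t; simp [hA]
  have hApos : ∀ t, 0 < (A t).re := fun t => by rw [hAre]; exact ha
  have hAne : ∀ t, A t ≠ 0 := fun t h => by
    have := hApos t; rw [h] at this; simp at this
  set G : ℝ → ℂ := fun t =>
    (∫ x in Set.Ioi (0:ℝ), ((x ^ (s - 1) : ℝ) : ℂ) * Complex.exp (-(A t) * x)) * (A t) ^ (s : ℂ)
    with hG
  have hAderiv : ∀ t, HasDerivAt A (a.im * Complex.I) t := by
    intro t
    have h1 : HasDerivAt (fun t : ℝ => ((t : ℝ) : ℂ)) 1 t := (hasDerivAt_id t).ofReal_comp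
    have h2 := ((h1.mul_const ((a.im : ℝ) : ℂ)).mul_const Complex.I).const_add ((a.re : ℝ) : ℂ)
    simpa [hA] using h2
  -- derivative of the integral part
  have hIderiv : ∀ t : ℝ, HasDerivAt
      (fun u => ∫ x in Set.Ioi (0:ℝ), ((x ^ (s - 1) : ℝ) : ℂ) * Complex.exp (-(A u) * x))
      ((-(a.im) * Complex.I) *
        ∫ x in Set.Ioi (0:ℝ), ((x ^ s : ℝ) : ℂ) * Complex.exp (-(A t) * x)) t := by
    intro t
    have main := hasDerivAt_integral_of_dominated_loc_of_lip
      (F := fun u (x : ℝ) => ((x ^ (s - 1) : ℝ) : ℂ) * Complex.exp (-(A u) * x))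
      (F' := fun x : ℝ => (-(a.im) * Complex.I) * (((x ^ s : ℝ) : ℂ) * Complex.exp (-(A t) * x)))
      (x₀ := t) (bound := fun x : ℝ => |a.im| * (x ^ s * Real.exp (-(a.re * x))))
      (Metric.ball_mem_nhds t one_pos)
      (Filter.Eventually.of_forall fun u =>
        (kobol_contOn (a := A u) (s - 1)).aestronglyMeasurable measurableSet_Ioi)
      (kobol_aux_int_cplx (hApos t) (by linarith))
      ((((kobol_contOn (a := A t) s).aestronglyMeasurable measurableSet_Ioi).const_mul _))
      ?_ ?_ ?_
    · have h := main.2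
      rw [integral_const_mul] at h
      exact h
    · -- Lipschitz bound
      filter_upwards [ae_restrict_mem measurableSet_Ioi] with x hx
      rw [mem_Ioi] at hx
      have hbnd : 0 ≤ |a.im| * (x ^ s * Real.exp (-(a.re * x))) := by positivity
      refine Convex.lipschitzOnWith_of_nnnorm_hasDerivWithin_le (convex_ball t 1)
        (f' := fun u => ((x ^ (s - 1) : ℝ) : ℂ) *
          (Complex.exp (-(A u) * x) * ((-(a.im) * Complex.I) * x))) ?_ ?_
      · intro u _
        have h1 : HasDerivAt (fun u : ℝ => -(A u) * (x : ℂ)) ((-(a.im) * Complex.I) * x) u := by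
          simpa [neg_mul] using ((hAderiv u).neg.mul_const (x : ℂ))
        exact ((h1.cexp).const_mul (((x ^ (s - 1) : ℝ) : ℂ))).hasDerivWithinAt
      · intro u _
        rw [← NNReal.coe_le_coe]
        simp only [coe_nnnorm, Real.coe_nnabs]
        rw [_root_.abs_of_nonneg hbnd]
        rw [norm_mul, norm_mul, norm_mul]
        simp only [Complex.norm_real, Real.norm_eq_abs,
          _root_.abs_of_nonneg (Real.rpow_nonneg hx.le _), Complex.norm_exp,
          norm_neg, norm_mul, Complex.norm_I]
        have hre : (-(A u) * (x : ℂ)).re = -(a.re * x) := by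
          simp [Complex.mul_re, hAre u, hA]
        rw [hre]
        rw [_root_.abs_of_nonneg hx.le]
        have hxs : x ^ (s - 1) * x = x ^ s := by
          rw [← Real.rpow_add_one hx.ne' (s - 1)]; ring_nf
        have hcalc : x ^ (s - 1) * (Real.exp (-(a.re * x)) * (|a.im| * 1 * x))
            = |a.im| * (x ^ s * Real.exp (-(a.re * x))) := by
          rw [← hxs]; ring
        rw [hcalc]
    · exact (kobol_aux_int_real ha (by linarith)).const_mul _
    · -- pointwise derivative
      filter_upwards [ae_restrict_mem measurableSet_Ioi] with x hx
      rw [mem_Ioi] at hx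
      have h1 : HasDerivAt (fun u : ℝ => -(A u) * (x : ℂ)) ((-(a.im) * Complex.I) * x) t := by
        simpa [neg_mul] using ((hAderiv t).neg.mul_const (x : ℂ))
      have h2 := (h1.cexp).const_mul (((x ^ (s - 1) : ℝ) : ℂ))
      refine h2.congr_deriv ?_
      have hxs : ((x ^ s : ℝ) : ℂ) = ((x ^ (s - 1) : ℝ) : ℂ) * x := by
        rw [← Complex.ofReal_mul, ← Real.rpow_add_one hx.ne' (s - 1)]; ring_nf
      rw [hxs]; ring
  -- derivative of G is zero
  have hGderiv : ∀ t, HasDerivAt G 0 t := by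
    intro t
    have hpow : HasDerivAt (fun u => (A u) ^ (s : ℂ))
        ((s : ℂ) * (A t) ^ ((s : ℂ) - 1) * (a.im * Complex.I)) t := by
      have h1 : HasDerivAt (fun z : ℂ => z ^ (s : ℂ)) ((s : ℂ) * (A t) ^ ((s : ℂ) - 1)) (A t) :=
        (Complex.hasStrictDerivAt_cpow_const
          (Complex.mem_slitPlane_iff.mpr (Or.inl (hApos t)))).hasDerivAt
      have h2 := HasDerivAt.scomp (x := t) h1 (hAderiv t)
      simpa [smul_eq_mul, mul_comm, Function.comp_def] using h2
    have hmul := (hIderiv t).mul hpow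
    refine hmul.congr_deriv ?_
    set I1 := ∫ x in Set.Ioi (0:ℝ), ((x ^ (s - 1) : ℝ) : ℂ) * Complex.exp (-(A t) * x) with hI1
    set I2 := ∫ x in Set.Ioi (0:ℝ), ((x ^ s : ℝ) : ℂ) * Complex.exp (-(A t) * x) with hI2
    have hrec : (A t) * I2 = (s : ℂ) * I1 := kobol_rec (hApos t) hs
    have hcp : (A t) ^ (s : ℂ) = (A t) * (A t) ^ ((s : ℂ) - 1) := by
      have he : (1 : ℂ) + ((s : ℂ) - 1) = (s : ℂ) := by ring
      have h2 := Complex.cpow_add (x := A t) 1 ((s : ℂ) - 1) (hAne t)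
      rw [he, Complex.cpow_one] at h2
      exact h2
    rw [hcp]
    set B := A t with hB
    clear_value B
    set C := B ^ ((s : ℂ) - 1) with hC
    clear_value C
    first
      | linear_combination (-(a.im : ℂ) * Complex.I * C) * hrec
      | linear_combination ((a.im : ℂ) * Complex.I * C) * hrec
  -- G is constant
  have hconst : G 1 = G 0 := by
    have hdiff : Differentiable ℝ G := fun t => (hGderiv t).differentiableAt
    exact is_const_of_deriv_eq_zero hdiff (fun t => (hGderiv t).deriv) 1 0
  have hA1 : A 1 = a := by simp [hA, Complex.re_add_im]
  have hA0 : A 0 = (a.re : ℂ) := by simp [hA]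
  -- compute G 0
  have hG0 : G 0 = (Real.Gamma s : ℂ) := by
    simp only [hG, hA0]
    have hcongr : ∫ x in Set.Ioi (0:ℝ), ((x ^ (s - 1) : ℝ) : ℂ) *
        Complex.exp (-(a.re : ℂ) * x) =
        ∫ x in Set.Ioi (0:ℝ), (x : ℂ) ^ ((s : ℂ) - 1) * Complex.exp (-((a.re : ℂ) * (x : ℂ))) := by
      refine setIntegral_congr_fun measurableSet_Ioi (fun x hx => ?_)
      rw [mem_Ioi] at hx
      rw [Complex.ofReal_cpow hx.le]
      push_cast
      ring_nf
    rw [hcongr, integral_cpow_mul_exp_neg_mul_Ioi (by simpa using hs) ha]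
    rw [Complex.Gamma_ofReal]
    have : ((1 / a.re : ℝ) : ℂ) ^ (s : ℂ) * ((a.re : ℝ) : ℂ) ^ (s : ℂ) = 1 := by
      rw [← mul_cpow_ofReal_nonneg (by positivity) ha.le]
      have hre1 : (1 / a.re) * a.re = 1 := by field_simp
      rw [← Complex.ofReal_mul, hre1, Complex.ofReal_one, Complex.one_cpow]
    calc (1 / (a.re : ℂ)) ^ (s : ℂ) * (Real.Gamma s : ℂ) * ((a.re : ℝ) : ℂ) ^ (s : ℂ)
        = (((1 / a.re : ℝ) : ℂ) ^ (s : ℂ) * ((a.re : ℝ) : ℂ) ^ (s : ℂ)) * (Real.Gamma s : ℂ) := by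
          push_cast; ring
      _ = (Real.Gamma s : ℂ) := by rw [this, one_mul]
  calc (∫ x in Set.Ioi (0:ℝ), ((x ^ (s - 1) : ℝ) : ℂ) * Complex.exp (-a * x)) * a ^ (s : ℂ)
      = G 1 := by simp only [hG, hA1]
    _ = G 0 := hconst
    _ = (Real.Gamma s : ℂ) := hG0

/-- Mean value bound for differences of complex exponentials. -/
lemma kobol_exp_sub_exp {z w : ℂ} {c : ℝ} (hz : z.re ≤ c) (hw : w.re ≤ c) :
    ‖Complex.exp z - Complex.exp w‖ ≤ ‖z - w‖ * Real.exp c := by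
  set f : ℝ → ℂ := fun t => Complex.exp (w + (t : ℂ) * (z - w)) with hf
  have hderiv : ∀ t ∈ Set.Icc (0:ℝ) 1, HasDerivWithinAt f
      ((z - w) * Complex.exp (w + (t : ℂ) * (z - w))) (Set.Icc (0:ℝ) 1) t := by
    intro t _
    have h1 : HasDerivAt (fun t : ℝ => w + (t : ℂ) * (z - w)) (z - w) t := by
      simpa using (((hasDerivAt_id t).ofReal_comp).mul_const (z - w)).const_add w
    simpa [mul_comm] using (h1.cexp).hasDerivWithinAt
  have hbound : ∀ t ∈ Set.Icc (0:ℝ) 1,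
      ‖(z - w) * Complex.exp (w + (t : ℂ) * (z - w))‖ ≤ ‖z - w‖ * Real.exp c := by
    intro t ht
    rw [norm_mul]
    apply mul_le_mul_of_nonneg_left _ (norm_nonneg _)
    rw [Complex.norm_exp]
    apply Real.exp_le_exp.mpr
    have : (w + (t : ℂ) * (z - w)).re = w.re + t * (z.re - w.re) := by simp
    rw [this]
    nlinarith [ht.1, ht.2]
  have key := Convex.norm_image_sub_le_of_norm_hasDerivWithin_le hderiv hbound
    (convex_Icc 0 1) (Set.left_mem_Icc.mpr zero_le_one) (Set.right_mem_Icc.mpr zero_le_one)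
  have hf1 : f 1 = Complex.exp z := by rw [hf]; norm_num
  have hf0 : f 0 = Complex.exp w := by rw [hf]; norm_num
  rw [hf1, hf0] at key
  simpa using key

theorem kobol_gamma_integral
    (ν lam : ℝ) (hν : ν ∈ Set.Ioo (0 : ℝ) 1) (hlam : 0 < lam)
    (ξ : ℂ) (hξ : -lam < ξ.im) :
    IntegrableOn
      (fun x : ℝ => (Complex.exp (Complex.I * ξ * x) - 1) *
        Complex.exp (-(lam : ℂ) * x) * ((x ^ (-ν - 1) : ℝ) : ℂ))
      (Set.Ioi (0 : ℝ)) ∧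
    (∫ x in Set.Ioi (0 : ℝ), (Complex.exp (Complex.I * ξ * x) - 1) *
        Complex.exp (-(lam : ℂ) * x) * ((x ^ (-ν - 1) : ℝ) : ℂ)) =
      (Real.Gamma (-ν) : ℂ) *
        (((lam : ℂ) - Complex.I * ξ) ^ (ν : ℂ) - (lam : ℂ) ^ (ν : ℂ)) := by
  obtain ⟨hν0, hν1⟩ := hν
  set a : ℂ := (lam : ℂ) - Complex.I * ξ with ha_def
  have ha : 0 < a.re := by
    simp only [ha_def, Complex.sub_re, Complex.ofReal_re, Complex.mul_re, Complex.I_re,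
      Complex.I_im]
    simp only [zero_mul, one_mul, zero_sub, sub_neg_eq_add]
    linarith
  have ha' : a ≠ 0 := fun h => by rw [h] at ha; simp at ha
  have hlam' : ((lam : ℂ)) ≠ 0 := by exact_mod_cast hlam.ne'
  have hlamre : (0:ℝ) < ((lam : ℂ)).re := by simpa using hlam
  set c : ℝ := min lam a.re with hc_def
  have hc : 0 < c := lt_min hlam ha
  -- the simplified integrand
  set f : ℝ → ℂ := fun x => Complex.exp (-a * x) - Complex.exp (-(lam : ℂ) * x) with hf
  have hfeq : ∀ x : ℝ, (Complex.exp (Complex.I * ξ * x) - 1) *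
      Complex.exp (-(lam : ℂ) * x) * ((x ^ (-ν - 1) : ℝ) : ℂ) =
      f x * ((x ^ (-ν - 1) : ℝ) : ℂ) := by
    intro x
    rw [hf]
    congr 1
    rw [sub_mul, one_mul, ← Complex.exp_add]
    congr 2
    rw [ha_def]; ring
  -- norm bound on f
  have hfbound : ∀ x : ℝ, 0 < x → ‖f x‖ ≤ ‖ξ‖ * x * Real.exp (-(c * x)) := by
    intro x hx
    have h1 : (-a * (x : ℂ)).re ≤ -(c * x) := by
      have : (-a * (x : ℂ)).re = -(a.re * x) := by simp [Complex.mul_re]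
      rw [this]
      have : c ≤ a.re := min_le_right _ _
      nlinarith
    have h2 : (-(lam : ℂ) * (x : ℂ)).re ≤ -(c * x) := by
      have : (-(lam : ℂ) * (x : ℂ)).re = -(lam * x) := by simp [Complex.mul_re]
      rw [this]
      have : c ≤ lam := min_le_left _ _
      nlinarith
    have key := kobol_exp_sub_exp h1 h2
    have hzw : -a * (x : ℂ) - -(lam : ℂ) * (x : ℂ) = (Complex.I * ξ) * x := by
      rw [ha_def]; ring
    rw [hzw] at key
    have hnorm : ‖(Complex.I * ξ) * (x : ℂ)‖ = ‖ξ‖ * x := by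
      simp [_root_.abs_of_nonneg hx.le]
    rw [hnorm] at key
    exact key
  -- Part 1: integrability
  have hmeas : ContinuousOn (fun x : ℝ => f x * ((x ^ (-ν - 1) : ℝ) : ℂ)) (Set.Ioi 0) := by
    apply ContinuousOn.mul
    · apply Continuous.continuousOn
      rw [hf]
      exact ((Complex.continuous_exp.comp (continuous_const.mul Complex.continuous_ofReal)).sub
        (Complex.continuous_exp.comp (continuous_const.mul Complex.continuous_ofReal)))
    · exact Complex.continuous_ofReal.comp_continuousOn
        (fun x hx => (Real.continuousAt_rpow_const x _ (Or.inl (ne_of_gt hx))).continuousWithinAt)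
  have hint : IntegrableOn (fun x : ℝ => f x * ((x ^ (-ν - 1) : ℝ) : ℂ)) (Set.Ioi 0) := by
    refine ((kobol_aux_int_real hc (by linarith : (-1:ℝ) < -ν)).const_mul
      (‖ξ‖)).mono' (hmeas.aestronglyMeasurable measurableSet_Ioi) ?_
    filter_upwards [ae_restrict_mem measurableSet_Ioi] with x hx
    rw [mem_Ioi] at hx
    rw [norm_mul, Complex.norm_real, Real.norm_eq_abs,
      _root_.abs_of_nonneg (Real.rpow_nonneg hx.le _)]
    have hb := hfbound x hx
    have hstep : ‖f x‖ * x ^ (-ν - 1) ≤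
        (‖ξ‖ * x * Real.exp (-(c * x))) * x ^ (-ν - 1) := by
      apply mul_le_mul_of_nonneg_right hb (Real.rpow_nonneg hx.le _)
    refine hstep.trans (le_of_eq ?_)
    have hxpow : x * x ^ (-ν - 1) = x ^ (-ν) := by
      nth_rewrite 1 [← Real.rpow_one x]
      rw [← Real.rpow_add hx]
      ring_nf
    calc (‖ξ‖ * x * Real.exp (-(c * x))) * x ^ (-ν - 1)
        = ‖ξ‖ * ((x * x ^ (-ν - 1)) * Real.exp (-(c * x))) := by ring
      _ = ‖ξ‖ * (x ^ (-ν) * Real.exp (-(c * x))) := by rw [hxpow]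
  refine ⟨IntegrableOn.congr_fun hint (fun x _ => (hfeq x).symm) measurableSet_Ioi, ?_⟩
  -- Part 2: value
  have hIeq : (∫ x in Set.Ioi (0 : ℝ), (Complex.exp (Complex.I * ξ * x) - 1) *
      Complex.exp (-(lam : ℂ) * x) * ((x ^ (-ν - 1) : ℝ) : ℂ)) =
      ∫ x in Set.Ioi (0 : ℝ), f x * ((x ^ (-ν - 1) : ℝ) : ℂ) :=
    setIntegral_congr_fun measurableSet_Ioi (fun x _ => hfeq x)
  rw [hIeq]
  -- integration by parts
  set g : ℝ → ℂ := fun x => f x * ((x ^ (-ν) : ℝ) : ℂ) with hg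
  set g' : ℝ → ℂ := fun x =>
    (-a) * (((x ^ (-ν) : ℝ) : ℂ) * Complex.exp (-a * x)) +
    (lam : ℂ) * (((x ^ (-ν) : ℝ) : ℂ) * Complex.exp (-(lam : ℂ) * x)) +
    (-ν : ℂ) * (f x * ((x ^ (-ν - 1) : ℝ) : ℂ)) with hg'
  have hderiv : ∀ x ∈ Set.Ioi (0:ℝ), HasDerivAt g (g' x) x := by
    intro x hx
    rw [mem_Ioi] at hx
    have hfd : HasDerivAt f ((-a) * Complex.exp (-a * x) +
        (lam : ℂ) * Complex.exp (-(lam : ℂ) * x)) x := by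
      have := (kobol_hasDerivAt_cexp a x).sub (kobol_hasDerivAt_cexp (lam : ℂ) x)
      refine this.congr_deriv ?_
      ring
    have hrd := kobol_hasDerivAt_rpow (r := -ν) hx
    have := hfd.mul hrd
    refine this.congr_deriv ?_
    rw [hg']
    have : (-ν : ℝ) - 1 = -ν - 1 := by ring
    rw [this]
    push_cast
    ring
  have i1 : IntegrableOn (fun x : ℝ => (-a) * (((x ^ (-ν) : ℝ) : ℂ) *
      Complex.exp (-a * x))) (Set.Ioi 0) :=
    (kobol_aux_int_cplx ha (by linarith : (-1:ℝ) < -ν)).const_mul _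
  have i2 : IntegrableOn (fun x : ℝ => (lam : ℂ) * (((x ^ (-ν) : ℝ) : ℂ) *
      Complex.exp (-(lam : ℂ) * x))) (Set.Ioi 0) :=
    (kobol_aux_int_cplx (a := (lam:ℂ)) hlamre (by linarith : (-1:ℝ) < -ν)).const_mul _
  have i3 : IntegrableOn (fun x : ℝ => (-ν : ℂ) * (f x * ((x ^ (-ν - 1) : ℝ) : ℂ)))
      (Set.Ioi 0) := hint.const_mul _
  have i12 : IntegrableOn (fun x : ℝ => (-a) * (((x ^ (-ν) : ℝ) : ℂ) * Complex.exp (-a * x)) +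
      (lam : ℂ) * (((x ^ (-ν) : ℝ) : ℂ) * Complex.exp (-(lam : ℂ) * x))) (Set.Ioi 0) :=
    i1.add i2
  have hint' : IntegrableOn g' (Set.Ioi (0:ℝ)) := i12.add i3
  have hcont : ContinuousWithinAt g (Set.Ici (0:ℝ)) 0 := by
    have h0 : g 0 = 0 := by simp [hg, hf]
    rw [ContinuousWithinAt, h0]
    apply squeeze_zero_norm' (a := fun x : ℝ => ‖ξ‖ * x ^ (1 - ν))
    · filter_upwards [eventually_mem_nhdsWithin] with x (hx : x ∈ Set.Ici (0:ℝ))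
      rcases eq_or_lt_of_le (mem_Ici.mp hx) with h | h
      · simp [hg, hf, ← h, Real.zero_rpow (by linarith : (1:ℝ) - ν ≠ 0)]
      · rw [hg]
        simp only
        rw [norm_mul, Complex.norm_real, Real.norm_eq_abs,
          _root_.abs_of_nonneg (Real.rpow_nonneg h.le _)]
        have hb := hfbound x h
        have hexp : Real.exp (-(c * x)) ≤ 1 := by
          rw [Real.exp_le_one_iff]
          nlinarith
        have h1 : ‖f x‖ ≤ ‖ξ‖ * x := by
          calc ‖f x‖ ≤ ‖ξ‖ * x * Real.exp (-(c * x)) := hb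
            _ ≤ ‖ξ‖ * x * 1 := by
                apply mul_le_mul_of_nonneg_left hexp; positivity
            _ = ‖ξ‖ * x := by ring
        calc ‖f x‖ * x ^ (-ν) ≤ (‖ξ‖ * x) * x ^ (-ν) := by
              apply mul_le_mul_of_nonneg_right h1 (Real.rpow_nonneg h.le _)
          _ = ‖ξ‖ * (x ^ (1:ℝ) * x ^ (-ν)) := by rw [Real.rpow_one]; ring
          _ = ‖ξ‖ * x ^ (1 - ν) := by
              rw [← Real.rpow_add h]; ring_nf
    · have h : ContinuousWithinAt (fun x : ℝ => ‖ξ‖ * x ^ (1 - ν))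
          (Set.Ici (0:ℝ)) 0 :=
        (continuousAt_const.mul
          (Real.continuousAt_rpow_const 0 (1 - ν) (Or.inr (by linarith)))).continuousWithinAt
      rw [ContinuousWithinAt] at h
      simpa [Real.zero_rpow (by linarith : (1:ℝ) - ν ≠ 0)] using h
  have htop : Tendsto g atTop (𝓝 0) := by
    have h1 := kobol_tendsto_top ha (-ν)
    have h2 := kobol_tendsto_top (a := (lam : ℂ)) hlamre (-ν)
    have := h1.sub h2
    rw [sub_zero] at this
    apply this.congr
    intro x
    rw [hg, hf]
    ring
  have key := integral_Ioi_of_hasDerivAt_of_tendsto hcont hderiv hint' htop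
  have h0 : g 0 = 0 := by simp [hg, hf]
  rw [h0, sub_zero] at key
  -- split the integral of g'
  set Ia := ∫ x in Set.Ioi (0:ℝ), ((x ^ (-ν) : ℝ) : ℂ) * Complex.exp (-a * x) with hIa
  set Il := ∫ x in Set.Ioi (0:ℝ), ((x ^ (-ν) : ℝ) : ℂ) * Complex.exp (-(lam : ℂ) * x) with hIl
  set Ih := ∫ x in Set.Ioi (0:ℝ), f x * ((x ^ (-ν - 1) : ℝ) : ℂ) with hIh
  have hsplit : ∫ x in Set.Ioi (0:ℝ), g' x =
      (-a) * Ia + (lam : ℂ) * Il + (-ν : ℂ) * Ih := by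
    rw [hg']
    rw [integral_add i12 i3, integral_add i1 i2,
      integral_const_mul, integral_const_mul, integral_const_mul]
  rw [key] at hsplit
  -- evaluate Ia and Il via the Gamma lemma
  have hs1 : (0:ℝ) < 1 - ν := by linarith
  have hGa : Ia * a ^ ((1 - ν : ℝ) : ℂ) = (Real.Gamma (1 - ν) : ℂ) := by
    have := kobol_gammaA hs1 ha
    have hexp : (1 - ν : ℝ) - 1 = -ν := by ring
    rw [hexp] at this
    rw [hIa]
    exact this
  have hGl : Il * ((lam : ℂ)) ^ ((1 - ν : ℝ) : ℂ) = (Real.Gamma (1 - ν) : ℂ) := by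
    have := kobol_gammaA hs1 hlamre
    have hexp : (1 - ν : ℝ) - 1 = -ν := by ring
    rw [hexp] at this
    rw [hIl]
    exact this
  -- a^(1-ν) * a^ν = a
  have hane : a ^ ((1 - ν : ℝ) : ℂ) ≠ 0 := by
    intro h
    rw [Complex.cpow_eq_zero_iff] at h
    exact ha' h.1
  have hlne : ((lam : ℂ)) ^ ((1 - ν : ℝ) : ℂ) ≠ 0 := by
    intro h
    rw [Complex.cpow_eq_zero_iff] at h
    exact hlam' h.1
  have hmul_a : a ^ ((1 - ν : ℝ) : ℂ) * a ^ (ν : ℂ) = a := by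
    have he : ((1 - ν : ℝ) : ℂ) + (ν : ℂ) = 1 := by push_cast; ring
    rw [← Complex.cpow_add _ _ ha', he, Complex.cpow_one]
  have hmul_l : ((lam : ℂ)) ^ ((1 - ν : ℝ) : ℂ) * ((lam : ℂ)) ^ (ν : ℂ) = (lam : ℂ) := by
    have he : ((1 - ν : ℝ) : ℂ) + (ν : ℂ) = 1 := by push_cast; ring
    rw [← Complex.cpow_add _ _ hlam', he, Complex.cpow_one]
  -- Gamma recurrence
  have hGrec : (Real.Gamma (1 - ν) : ℂ) = (-ν : ℂ) * (Real.Gamma (-ν) : ℂ) := by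
    have := Real.Gamma_add_one (s := -ν) (by linarith : (-ν : ℝ) ≠ 0)
    have heq : -ν + 1 = 1 - ν := by ring
    rw [heq] at this
    rw [this]
    push_cast
    ring
  -- final computation
  have hνne : (ν : ℂ) ≠ 0 := by exact_mod_cast hν0.ne'
  -- from hsplit : 0 = -a * Ia + lam * Il + (-ν) * Ih
  -- a * Ia * a^(1-ν) = a * Γ(1-ν); also a = a^(1-ν) * a^ν
  -- => a * Ia = a^ν * Γ(1-ν) (divide by a^(1-ν))
  have haIa : a * Ia = a ^ (ν : ℂ) * (Real.Gamma (1 - ν) : ℂ) := by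
    have h1 : a * Ia * a ^ ((1 - ν : ℝ) : ℂ) =
        a ^ (ν : ℂ) * (Real.Gamma (1 - ν) : ℂ) * a ^ ((1 - ν : ℝ) : ℂ) := by
      calc a * Ia * a ^ ((1 - ν : ℝ) : ℂ) = a * (Ia * a ^ ((1 - ν : ℝ) : ℂ)) := by ring
        _ = a * (Real.Gamma (1 - ν) : ℂ) := by rw [hGa]
        _ = (a ^ ((1 - ν : ℝ) : ℂ) * a ^ (ν : ℂ)) * (Real.Gamma (1 - ν) : ℂ) := by rw [hmul_a]
        _ = a ^ (ν : ℂ) * (Real.Gamma (1 - ν) : ℂ) * a ^ ((1 - ν : ℝ) : ℂ) := by ring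
    exact mul_right_cancel₀ hane h1
  have hlIl : (lam : ℂ) * Il = ((lam : ℂ)) ^ (ν : ℂ) * (Real.Gamma (1 - ν) : ℂ) := by
    have h1 : (lam : ℂ) * Il * ((lam : ℂ)) ^ ((1 - ν : ℝ) : ℂ) =
        ((lam : ℂ)) ^ (ν : ℂ) * (Real.Gamma (1 - ν) : ℂ) * ((lam : ℂ)) ^ ((1 - ν : ℝ) : ℂ) := by
      calc (lam : ℂ) * Il * ((lam : ℂ)) ^ ((1 - ν : ℝ) : ℂ)
          = (lam : ℂ) * (Il * ((lam : ℂ)) ^ ((1 - ν : ℝ) : ℂ)) := by ring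
        _ = (lam : ℂ) * (Real.Gamma (1 - ν) : ℂ) := by rw [hGl]
        _ = (((lam : ℂ)) ^ ((1 - ν : ℝ) : ℂ) * ((lam : ℂ)) ^ (ν : ℂ)) *
            (Real.Gamma (1 - ν) : ℂ) := by rw [hmul_l]
        _ = ((lam : ℂ)) ^ (ν : ℂ) * (Real.Gamma (1 - ν) : ℂ) *
            ((lam : ℂ)) ^ ((1 - ν : ℝ) : ℂ) := by ring
    exact mul_right_cancel₀ hlne h1
  -- 0 = -(a * Ia) + lam * Il - ν * Ih
  -- => ν * Ih = lam^ν Γ(1-ν) - a^ν Γ(1-ν) = (-ν Γ(-ν))(lam^ν - a^ν)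
  -- => Ih = Γ(-ν) (a^ν - lam^ν)
  clear_value a
  have hfinal : (ν : ℂ) * Ih = (ν : ℂ) * ((Real.Gamma (-ν) : ℂ) *
      (a ^ (ν : ℂ) - ((lam : ℂ)) ^ (ν : ℂ))) := by
    linear_combination hsplit - haIa + hlIl +
      (-(a ^ (ν : ℂ) - ((lam : ℂ)) ^ (ν : ℂ))) * hGrec
  have hfin := mul_left_cancel₀ hνne hfinal
  rw [hfin]
end

section
/- Let ν ∈ (0,2) with ν ≠ 1, c > 0 and λ_- < 0 < λ_+. Then for every φ ∈ (−π/2, π/2), lim_{ρ → +∞} ψ⁰(ρ e^{iφ}) / ρ^ν = c_∞(φ), where c_∞(φ) = −2 c Γ(−ν) cos(νπ/2) e^{iνφ}. -/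
open Complex Set Filter
open scoped Real Topology

/-- The KoBoL (CGMY) characteristic exponent without drift, with intensity `c`,
order `ν` and steepness parameters `λ₋ < 0 < λ₊`:
`ψ⁰(ξ) = c Γ(-ν)[(-λ₋)^ν - (-λ₋ - iξ)^ν + λ₊^ν - (λ₊ + iξ)^ν]`. -/
noncomputable def kobolPsi0 (ν c lamM lamP : ℝ) (ξ : ℂ) : ℂ :=
  (c : ℂ) * (Real.Gamma (-ν) : ℂ) *
    (((-lamM : ℝ) : ℂ) ^ (ν : ℂ) - ((-lamM : ℂ) - Complex.I * ξ) ^ (ν : ℂ) +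
      ((lamP : ℝ) : ℂ) ^ (ν : ℂ) - ((lamP : ℂ) + Complex.I * ξ) ^ (ν : ℂ))

private lemma ofReal_mul_cpow' {r : ℝ} (hr : 0 < r) (z w : ℂ) :
    ((r : ℂ) * z) ^ w = (r : ℂ) ^ w * z ^ w := by
  rcases eq_or_ne z 0 with rfl | hz
  · rcases eq_or_ne w 0 with rfl | hw
    · simp
    · simp [Complex.zero_cpow hw]
  · have hr' : (r : ℂ) ≠ 0 := by exact_mod_cast hr.ne'
    rw [Complex.cpow_def_of_ne_zero (mul_ne_zero hr' hz),
      Complex.cpow_def_of_ne_zero hr', Complex.cpow_def_of_ne_zero hz,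
      Complex.log_ofReal_mul hr hz, ← Complex.exp_add, add_mul]
    congr 2
    rw [Complex.ofReal_log hr.le]

theorem kobolPsi0_asymptotics
    (ν c lamM lamP : ℝ) (hν : ν ∈ Set.Ioo (0 : ℝ) 2) (hν1 : ν ≠ 1)
    (hc : 0 < c) (hlamM : lamM < 0) (hlamP : 0 < lamP)
    (φ : ℝ) (hφ : φ ∈ Set.Ioo (-(π / 2)) (π / 2)) :
    Tendsto
      (fun ρ : ℝ =>
        kobolPsi0 ν c lamM lamP ((ρ : ℂ) * Complex.exp (Complex.I * (φ : ℂ))) /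
          (ρ : ℂ) ^ (ν : ℂ))
      atTop
      (𝓝 (-2 * (c : ℂ) * (Real.Gamma (-ν) : ℂ) * (Real.cos (ν * π / 2) : ℂ) *
        Complex.exp (Complex.I * (ν : ℂ) * (φ : ℂ)))) := by
  obtain ⟨hν0, hν2⟩ := hν
  obtain ⟨hφ1, hφ2⟩ := hφ
  have hπ := Real.pi_pos
  have hcos : 0 < Real.cos φ := Real.cos_pos_of_mem_Ioo ⟨by linarith, hφ2⟩
  set e : ℂ := Complex.exp (Complex.I * (φ : ℂ)) with he
  have he' : e = Complex.exp ((φ : ℂ) * Complex.I) := by rw [he, mul_comm]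
  -- the two rotated directions
  have hA : -(Complex.I * e) = Complex.exp (((φ - π / 2 : ℝ) : ℂ) * Complex.I) := by
    rw [he', Complex.ofReal_sub, sub_mul, Complex.exp_sub]
    have : Complex.exp (((π / 2 : ℝ) : ℂ) * Complex.I) = Complex.I := by
      rw [Complex.exp_mul_I]
      push_cast
      rw [Complex.cos_pi_div_two, Complex.sin_pi_div_two]
      ring
    rw [this]
    field_simp
    ring_nf; simp [Complex.I_sq]
  have hB : Complex.I * e = Complex.exp (((φ + π / 2 : ℝ) : ℂ) * Complex.I) := by
    rw [he', Complex.ofReal_add, add_mul, Complex.exp_add]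
    have : Complex.exp (((π / 2 : ℝ) : ℂ) * Complex.I) = Complex.I := by
      rw [Complex.exp_mul_I]
      push_cast
      rw [Complex.cos_pi_div_two, Complex.sin_pi_div_two]
      ring
    rw [this]
    ring
  -- cpow values at the limit directions
  have hAlog : Complex.log (-(Complex.I * e)) = ((φ - π / 2 : ℝ) : ℂ) * Complex.I := by
    rw [hA]
    refine Complex.log_exp ?_ ?_ <;> simp <;> [linarith; linarith]
  have hBlog : Complex.log (Complex.I * e) = ((φ + π / 2 : ℝ) : ℂ) * Complex.I := by
    rw [hB]
    refine Complex.log_exp ?_ ?_ <;> simp <;> [linarith; linarith]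
  have hAne : -(Complex.I * e) ≠ 0 := by
    rw [hA]; exact Complex.exp_ne_zero _
  have hBne : Complex.I * e ≠ 0 := by
    rw [hB]; exact Complex.exp_ne_zero _
  have hAcpow : (-(Complex.I * e)) ^ (ν : ℂ) =
      Complex.exp ((((φ - π / 2 : ℝ) : ℂ) * Complex.I) * (ν : ℂ)) := by
    rw [Complex.cpow_def_of_ne_zero hAne, hAlog]
  have hBcpow : (Complex.I * e) ^ (ν : ℂ) =
      Complex.exp ((((φ + π / 2 : ℝ) : ℂ) * Complex.I) * (ν : ℂ)) := by
    rw [Complex.cpow_def_of_ne_zero hBne, hBlog]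
  -- slitPlane membership
  have heRe : e.re = Real.cos φ := by rw [he']; exact Complex.exp_ofReal_mul_I_re φ
  have hmemA : -(Complex.I * e) ∈ Complex.slitPlane := by
    rw [Complex.mem_slitPlane_iff]
    right
    simp only [Complex.neg_im, Complex.mul_im, Complex.I_re, Complex.I_im, zero_mul, one_mul,
      zero_add, heRe]
    simpa using hcos.ne'
  have hmemB : Complex.I * e ∈ Complex.slitPlane := by
    rw [Complex.mem_slitPlane_iff]
    right
    simp only [Complex.mul_im, Complex.I_re, Complex.I_im, zero_mul, one_mul, zero_add, heRe]
    exact hcos.ne'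
  -- basic limits
  have hz1 : Tendsto (fun ρ : ℝ => ((ρ : ℂ) ^ (ν : ℂ))⁻¹) atTop (𝓝 0) := by
    have h1 : Tendsto (fun ρ : ℝ => (ρ ^ ν)⁻¹) atTop (𝓝 0) :=
      (tendsto_rpow_atTop hν0).inv_tendsto_atTop
    have h2 := (Complex.continuous_ofReal.tendsto 0).comp h1
    simp only [Complex.ofReal_zero] at h2
    refine h2.congr' ?_
    filter_upwards [eventually_gt_atTop (0 : ℝ)] with ρ hρ
    simp only [Function.comp_apply, Complex.ofReal_inv, Complex.ofReal_cpow hρ.le,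
      Complex.ofReal_natCast]
  have hdiv : ∀ a : ℂ, Tendsto (fun ρ : ℝ => a / (ρ : ℂ)) atTop (𝓝 0) := by
    intro a
    rw [tendsto_zero_iff_norm_tendsto_zero]
    have : Tendsto (fun ρ : ℝ => ‖a‖ / |ρ|) atTop (𝓝 0) :=
      Tendsto.div_atTop tendsto_const_nhds (tendsto_abs_atTop_atTop)
    refine this.congr fun ρ => ?_
    simp [norm_div]
  have hz2 : Tendsto (fun ρ : ℝ => ((-lamM : ℂ)) / ρ - Complex.I * e) atTop
      (𝓝 (-(Complex.I * e))) := by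
    simpa using (hdiv (-lamM : ℂ)).sub_const (Complex.I * e)
  have hz3 : Tendsto (fun ρ : ℝ => ((lamP : ℂ)) / ρ + Complex.I * e) atTop
      (𝓝 (Complex.I * e)) := by
    simpa using (hdiv (lamP : ℂ)).add_const (Complex.I * e)
  have hcA : Tendsto (fun ρ : ℝ => (((-lamM : ℂ)) / ρ - Complex.I * e) ^ (ν : ℂ)) atTop
      (𝓝 ((-(Complex.I * e)) ^ (ν : ℂ))) :=
    (continuousAt_cpow_const hmemA).tendsto.comp hz2
  have hcB : Tendsto (fun ρ : ℝ => (((lamP : ℂ)) / ρ + Complex.I * e) ^ (ν : ℂ)) atTop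
      (𝓝 ((Complex.I * e) ^ (ν : ℂ))) :=
    (continuousAt_cpow_const hmemB).tendsto.comp hz3
  -- the combined limit
  set Mν : ℂ := ((-lamM : ℝ) : ℂ) ^ (ν : ℂ)
  set Pν : ℂ := ((lamP : ℝ) : ℂ) ^ (ν : ℂ)
  have hg : Tendsto (fun ρ : ℝ =>
      (c : ℂ) * (Real.Gamma (-ν) : ℂ) *
        (Mν * ((ρ : ℂ) ^ (ν : ℂ))⁻¹ - (((-lamM : ℂ)) / ρ - Complex.I * e) ^ (ν : ℂ) +
          Pν * ((ρ : ℂ) ^ (ν : ℂ))⁻¹ - (((lamP : ℂ)) / ρ + Complex.I * e) ^ (ν : ℂ))) atTop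
      (𝓝 ((c : ℂ) * (Real.Gamma (-ν) : ℂ) *
        (Mν * 0 - (-(Complex.I * e)) ^ (ν : ℂ) + Pν * 0 - (Complex.I * e) ^ (ν : ℂ)))) :=
    ((((hz1.const_mul Mν).sub hcA).add (hz1.const_mul Pν)).sub hcB).const_mul _
  -- identify the limit value
  have hval : (c : ℂ) * (Real.Gamma (-ν) : ℂ) *
      (Mν * 0 - (-(Complex.I * e)) ^ (ν : ℂ) + Pν * 0 - (Complex.I * e) ^ (ν : ℂ)) =
      -2 * (c : ℂ) * (Real.Gamma (-ν) : ℂ) * (Real.cos (ν * π / 2) : ℂ) *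
        Complex.exp (Complex.I * (ν : ℂ) * (φ : ℂ)) := by
    rw [hAcpow, hBcpow, Complex.ofReal_cos, Complex.cos]
    have e1 : Complex.exp ((((φ + π / 2 : ℝ) : ℂ) * Complex.I) * (ν : ℂ)) =
        Complex.exp (((ν * π / 2 : ℝ) : ℂ) * Complex.I) *
          Complex.exp (Complex.I * (ν : ℂ) * (φ : ℂ)) := by
      rw [← Complex.exp_add]; congr 1; push_cast; ring
    have e2 : Complex.exp ((((φ - π / 2 : ℝ) : ℂ) * Complex.I) * (ν : ℂ)) =
        Complex.exp (-(((ν * π / 2 : ℝ) : ℂ)) * Complex.I) *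
          Complex.exp (Complex.I * (ν : ℂ) * (φ : ℂ)) := by
      rw [← Complex.exp_add]; congr 1; push_cast; ring
    rw [e1, e2]
    push_cast
    ring
  rw [hval] at hg
  -- eventual equality of the two functions
  refine hg.congr' ?_
  filter_upwards [eventually_gt_atTop (0 : ℝ)] with ρ hρ
  have hρ0 : (ρ : ℂ) ≠ 0 := by exact_mod_cast hρ.ne'
  have hρν : (ρ : ℂ) ^ (ν : ℂ) ≠ 0 := by
    rw [Complex.cpow_def_of_ne_zero hρ0]; exact Complex.exp_ne_zero _
  have f1 : ((-lamM : ℂ) - Complex.I * ((ρ : ℂ) * e)) =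
      (ρ : ℂ) * (((-lamM : ℂ)) / ρ - Complex.I * e) := by
    field_simp
  have f2 : ((lamP : ℂ) + Complex.I * ((ρ : ℂ) * e)) =
      (ρ : ℂ) * (((lamP : ℂ)) / ρ + Complex.I * e) := by
    field_simp
  simp only [kobolPsi0, ← he, f1, f2, ofReal_mul_cpow' hρ]
  field_simp
  rfl
end

section
/- Let ν ∈ (0,2) with ν ≠ 1 and c > 0, and let c_∞(φ) = −2 c Γ(−ν) cos(νπ/2) e^{iνφ}. Then for every φ ∈ ℝ with |φ| < min(π/2, π/(2ν)), one has Re c_∞(φ) > 0. In particular, −2 c Γ(−ν) cos(νπ/2) > 0 for all ν ∈ (0,2)∖{1}, and for ν ∈ (0,1) the inequality Re c_∞(φ) > 0 holds for all φ ∈ (−π/2, π/2). -/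
open Complex Set
open scoped Real

/-- The leading asymptotic coefficient of the KoBoL characteristic exponent:
`c_∞(φ) = -2 c Γ(-ν) cos(νπ/2) e^{iνφ}`. -/
noncomputable def kobolCinf (ν c φ : ℝ) : ℂ :=
  -2 * (c : ℂ) * (Real.Gamma (-ν) : ℂ) * (Real.cos (ν * π / 2) : ℂ) *
    Complex.exp (Complex.I * (ν : ℂ) * (φ : ℂ))

lemma kobolCinf_re (ν c φ : ℝ) :
    (kobolCinf ν c φ).re =
      (-2 * c * Real.Gamma (-ν) * Real.cos (ν * π / 2)) * Real.cos (ν * φ) := by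
  have harg : Complex.I * (ν : ℂ) * (φ : ℂ) = ((ν * φ : ℝ) : ℂ) * Complex.I := by
    push_cast; ring
  unfold kobolCinf
  rw [harg]
  set x := Real.cos (ν * π / 2) with hx
  simp [Complex.mul_re, Complex.mul_im, Complex.exp_ofReal_mul_I_re,
    Complex.exp_ofReal_mul_I_im]
  left
  rw [show ((ν : ℂ) * (φ : ℂ) * Complex.I) = ((ν * φ : ℝ) : ℂ) * Complex.I by push_cast; ring,
    Complex.exp_ofReal_mul_I_re]

lemma kobolA_pos (ν c : ℝ) (hν : ν ∈ Set.Ioo (0 : ℝ) 2) (hν1 : ν ≠ 1) (hc : 0 < c) :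
    0 < -2 * c * Real.Gamma (-ν) * Real.cos (ν * π / 2) := by
  obtain ⟨h0, h2⟩ := hν
  have hG : Real.Gamma (-ν) = Real.Gamma (1 - ν) / (-ν) := by
    have h := Real.Gamma_add_one (s := -ν) (by simpa using h0.ne')
    rw [show (-ν + 1) = 1 - ν by ring] at h
    rw [eq_div_iff (neg_ne_zero.mpr h0.ne')]
    linarith
  rcases lt_or_gt_of_ne hν1 with h1 | h1
  · -- ν < 1
    have hG1 : 0 < Real.Gamma (1 - ν) := Real.Gamma_pos_of_pos (by linarith)
    have hGneg : Real.Gamma (-ν) < 0 := by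
      rw [hG]; exact div_neg_of_pos_of_neg hG1 (by linarith)
    have hcos : 0 < Real.cos (ν * π / 2) := by
      apply Real.cos_pos_of_mem_Ioo
      constructor
      · nlinarith [Real.pi_pos]
      · nlinarith [Real.pi_pos]
    nlinarith [mul_pos (mul_pos hc (neg_pos.mpr hGneg)) hcos]
  · -- 1 < ν
    have hG2 : 0 < Real.Gamma (2 - ν) := Real.Gamma_pos_of_pos (by linarith)
    have hG1 : Real.Gamma (1 - ν) = Real.Gamma (2 - ν) / (1 - ν) := by
      have h := Real.Gamma_add_one (s := 1 - ν) (by intro h; apply hν1; linarith [sub_eq_zero.mp h])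
      rw [show (1 - ν + 1) = 2 - ν by ring] at h
      rw [eq_div_iff (by intro hh; apply hν1; linarith [sub_eq_zero.mp hh])]
      linarith
    have hG1neg : Real.Gamma (1 - ν) < 0 := by
      rw [hG1]; exact div_neg_of_pos_of_neg hG2 (by linarith)
    have hGpos : 0 < Real.Gamma (-ν) := by
      rw [hG]; exact div_pos_of_neg_of_neg hG1neg (by linarith)
    have hcos : Real.cos (ν * π / 2) < 0 := by
      apply Real.cos_neg_of_pi_div_two_lt_of_lt
      · nlinarith [Real.pi_pos]
      · nlinarith [Real.pi_pos]
    nlinarith [mul_pos (mul_pos hc hGpos) (neg_pos.mpr hcos)]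

theorem kobolCinf_re_pos
    (ν c : ℝ) (hν : ν ∈ Set.Ioo (0 : ℝ) 2) (hν1 : ν ≠ 1) (hc : 0 < c) :
    (∀ φ : ℝ, |φ| < min (π / 2) (π / (2 * ν)) → 0 < (kobolCinf ν c φ).re) ∧
    0 < -2 * c * Real.Gamma (-ν) * Real.cos (ν * π / 2) ∧
    (ν < 1 → ∀ φ ∈ Set.Ioo (-(π / 2)) (π / 2), 0 < (kobolCinf ν c φ).re) := by
  obtain ⟨h0, h2⟩ := hν
  have hA := kobolA_pos ν c ⟨h0, h2⟩ hν1 hc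
  have key : ∀ φ : ℝ, |ν * φ| < π / 2 → 0 < (kobolCinf ν c φ).re := by
    intro φ hφ
    rw [kobolCinf_re]
    have hcos : 0 < Real.cos (ν * φ) := by
      apply Real.cos_pos_of_mem_Ioo
      rw [Set.mem_Ioo]
      exact abs_lt.mp hφ
    positivity
  refine ⟨?_, hA, ?_⟩
  · intro φ hφ
    apply key
    have h1 : |φ| < π / (2 * ν) := lt_of_lt_of_le hφ (min_le_right _ _)
    rw [abs_mul, abs_of_pos h0]
    calc ν * |φ| < ν * (π / (2 * ν)) := by
          exact (mul_lt_mul_iff_right₀ h0).mpr h1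
      _ = π / 2 := by field_simp
  · intro h1 φ hφ
    apply key
    rw [abs_mul, abs_of_pos h0]
    have hφ' : |φ| < π / 2 := abs_lt.mpr ⟨hφ.1, hφ.2⟩
    nlinarith [abs_nonneg φ, Real.pi_pos]
end

section
/- Let ν ∈ (0,1), c > 0, μ ∈ ℝ, λ_- < 0 < λ_+, and let ψ(ξ) = −iμξ + ψ⁰(ξ) on the complex plane with the cuts i(−∞,λ_-] and i[λ_+,∞) removed. Then for every q > 0 there exist σ_-(q) and σ_+(q) with λ_- < σ_-(q) < 0 < σ_+(q) < λ_+ such that for every η ∈ ℂ with Im η ∈ (σ_-(q), σ_+(q)), the value q + ψ(η) does not belong to the half-line (−∞, 0] of the real axis. -/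
open Complex Set

/-- The full KoBoL characteristic exponent with drift `μ`: `ψ(ξ) = -iμξ + ψ⁰(ξ)`. -/
noncomputable def kobolPsi (ν c lamM lamP μ : ℝ) (ξ : ℂ) : ℂ :=
  -Complex.I * (μ : ℂ) * ξ + kobolPsi0 ν c lamM lamP ξ


open Real in

lemma cos_rpow_le_cos_mul {ν : ℝ} (hν0 : 0 ≤ ν) (hν1 : ν ≤ 1) {θ : ℝ}
    (hθ0 : 0 ≤ θ) (hθ : θ < π / 2) : Real.cos θ ^ ν ≤ Real.cos (ν * θ) := by
  set f : ℝ → ℝ := fun x => Real.cos (ν * x) - Real.cos x ^ ν with hf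
  have hcont : Continuous f := by
    apply Continuous.sub
    · exact Real.continuous_cos.comp (continuous_const.mul continuous_id)
    · exact continuous_iff_continuousAt.2 fun x =>
        (Real.continuousAt_rpow_const _ _ (Or.inr hν0)).comp Real.continuous_cos.continuousAt
  have key : ∀ x ∈ Set.Ioo 0 θ, 0 ≤ deriv f x := by
    intro x hx
    have hx2 : x < π / 2 := hx.2.trans hθ
    have hcos : 0 < Real.cos x := Real.cos_pos_of_mem_Ioo ⟨by linarith [hx.1], hx2⟩
    have h1 : HasDerivAt (fun y => Real.cos (ν * y)) (-Real.sin (ν * x) * ν) x := by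
      simpa [Function.comp_def] using (Real.hasDerivAt_cos (ν * x)).comp x ((hasDerivAt_id x).const_mul ν)
    have h2 : HasDerivAt (fun y => Real.cos y ^ ν) (-Real.sin x * ν * Real.cos x ^ (ν - 1)) x :=
      (Real.hasDerivAt_cos x).rpow_const (Or.inl hcos.ne')
    have hd : HasDerivAt f (-Real.sin (ν * x) * ν - -Real.sin x * ν * Real.cos x ^ (ν - 1)) x :=
      h1.sub h2
    rw [hd.deriv]
    have hsinx : 0 ≤ Real.sin x := Real.sin_nonneg_of_nonneg_of_le_pi hx.1.le (by linarith [Real.pi_pos])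
    have h3 : Real.sin (ν * x) ≤ Real.sin x := by
      have : ν * x ≤ x := by nlinarith [hx.1]
      have hnx : 0 ≤ ν * x := mul_nonneg hν0 hx.1.le
      exact Real.strictMonoOn_sin.monotoneOn ⟨by linarith [Real.pi_pos], by linarith⟩
        ⟨by linarith [Real.pi_pos], hx2.le⟩ this
    have h4 : (1:ℝ) ≤ Real.cos x ^ (ν - 1) :=
      Real.one_le_rpow_of_pos_of_le_one_of_nonpos hcos (Real.cos_le_one x) (by linarith)
    have h5 : Real.sin x ≤ Real.sin x * Real.cos x ^ (ν - 1) := le_mul_of_one_le_right hsinx h4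
    nlinarith
  have hmono : MonotoneOn f (Set.Icc 0 θ) := by
    apply monotoneOn_of_deriv_nonneg (convex_Icc 0 θ) hcont.continuousOn
    · intro x hx
      rw [interior_Icc] at hx
      have hx2 : x < π / 2 := hx.2.trans hθ
      have hcos : 0 < Real.cos x := Real.cos_pos_of_mem_Ioo ⟨by linarith [hx.1], hx2⟩
      exact (((Real.hasDerivAt_cos (ν*x)).comp x ((hasDerivAt_id x).const_mul ν)).sub
        ((Real.hasDerivAt_cos x).rpow_const (Or.inl hcos.ne'))).differentiableAt.differentiableWithinAt
    · intro x hx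
      rw [interior_Icc] at hx
      exact key x hx
  have h0 : f 0 = 0 := by simp [hf]
  have := hmono (Set.left_mem_Icc.2 hθ0) (Set.right_mem_Icc.2 hθ0) hθ0
  rw [h0] at this
  simpa [hf, sub_nonneg] using this


open Real in
lemma re_rpow_le_re_cpow {w : ℂ} (hw : 0 < w.re) {ν : ℝ} (hν0 : 0 ≤ ν) (hν1 : ν ≤ 1) :
    w.re ^ ν ≤ (w ^ (ν : ℂ)).re := by
  have hne : w ≠ 0 := fun h => by simp [h] at hw
  have habs : 0 < ‖w‖ := norm_pos_iff.mpr hne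
  have harg : |Complex.arg w| < π / 2 := Complex.abs_arg_lt_pi_div_two_iff.2 (Or.inl hw)
  have hre : (w ^ (ν : ℂ)).re = ‖w‖ ^ ν * Real.cos (ν * Complex.arg w) := by
    rw [Complex.cpow_def_of_ne_zero hne, Complex.exp_re]
    have h1 : (Complex.log w * (ν : ℂ)).re = Real.log (‖w‖) * ν := by
      simp [Complex.mul_re, Complex.log_re]
    have h2 : (Complex.log w * (ν : ℂ)).im = Complex.arg w * ν := by
      simp [Complex.mul_im, Complex.log_im]
    rw [h1, h2, Real.rpow_def_of_pos habs, mul_comm (Complex.arg w) ν]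
  rw [hre]
  have hcosarg : Real.cos (Complex.arg w) = w.re / ‖w‖ := Complex.cos_arg hne
  have hwre : w.re = ‖w‖ * Real.cos (Complex.arg w) := by
    rw [hcosarg]; field_simp
  rw [hwre, Real.mul_rpow habs.le (by rw [hcosarg]; positivity)]
  have hkey : Real.cos (Complex.arg w) ^ ν ≤ Real.cos (ν * Complex.arg w) := by
    have h := cos_rpow_le_cos_mul hν0 hν1 (abs_nonneg (Complex.arg w)) harg
    rwa [Real.cos_abs, show ν * |Complex.arg w| = |ν * Complex.arg w| by
      rw [abs_mul, _root_.abs_of_nonneg hν0], Real.cos_abs] at h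
  exact mul_le_mul_of_nonneg_left hkey (Real.rpow_nonneg habs.le ν)

theorem kobol_q_plus_psi_avoids_negative_halfline
    (ν c lamM lamP μ : ℝ) (hν : ν ∈ Set.Ioo (0 : ℝ) 1)
    (hc : 0 < c) (hlamM : lamM < 0) (hlamP : 0 < lamP) :
    ∀ q : ℝ, 0 < q → ∃ σm σp : ℝ,
      lamM < σm ∧ σm < 0 ∧ 0 < σp ∧ σp < lamP ∧
      ∀ η : ℂ, η.im ∈ Set.Ioo σm σp →
        ∀ x : ℝ, x ≤ 0 → (q : ℂ) + kobolPsi ν c lamM lamP μ η ≠ (x : ℂ) := by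
  obtain ⟨hν0, hν1⟩ := hν
  intro q hq
  -- Gamma (-ν) is negative
  have hGn : Real.Gamma (-ν) < 0 := by
    have h1 : 0 < Real.Gamma (1 - ν) := Real.Gamma_pos_of_pos (by linarith)
    have h2 : Real.Gamma (-ν + 1) = -ν * Real.Gamma (-ν) :=
      Real.Gamma_add_one (by simp; linarith)
    rw [show -ν + 1 = 1 - ν by ring] at h2
    nlinarith
  set G : ℝ := -Real.Gamma (-ν) with hGdef
  have hG : 0 < G := by simp [hGdef]; linarith
  set A : ℝ := (-lamM) ^ ν with hA
  set B : ℝ := lamP ^ ν with hB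
  set h : ℝ → ℝ := fun δ => |μ| * δ + c * G * (A - (-lamM - δ) ^ ν + (B - (lamP - δ) ^ ν))
    with hh
  have hcont : ContinuousAt h 0 := by
    apply ContinuousAt.add
    · exact (continuous_const.mul continuous_id).continuousAt
    · apply ContinuousAt.mul continuousAt_const
      apply ContinuousAt.add
      · apply ContinuousAt.sub continuousAt_const
        exact (Real.continuousAt_rpow_const _ _ (Or.inr hν0.le)).comp
          ((continuous_const.sub continuous_id).continuousAt)
      · apply ContinuousAt.sub continuousAt_const
        exact (Real.continuousAt_rpow_const _ _ (Or.inr hν0.le)).comp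
          ((continuous_const.sub continuous_id).continuousAt)
  have h0 : h 0 = 0 := by simp [hh, ← hA, ← hB]
  have hev : ∀ᶠ δ in nhds (0 : ℝ), h δ < q := by
    have : Set.Iio q ∈ nhds (h 0) := Iio_mem_nhds (by rw [h0]; exact hq)
    exact hcont this
  rw [Metric.eventually_nhds_iff] at hev
  obtain ⟨ε, hε, hball⟩ := hev
  set δ : ℝ := min (ε / 2) (min (-lamM) lamP / 2) with hδdef
  have hδpos : 0 < δ := by
    apply lt_min (by linarith)
    have : 0 < min (-lamM) lamP := lt_min (by linarith) hlamP
    linarith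
  have hδM : δ < -lamM := by
    have h1 : δ ≤ min (-lamM) lamP / 2 := min_le_right _ _
    have h2 : min (-lamM) lamP ≤ -lamM := min_le_left _ _
    have : 0 < min (-lamM) lamP := lt_min (by linarith) hlamP
    linarith
  have hδP : δ < lamP := by
    have h1 : δ ≤ min (-lamM) lamP / 2 := min_le_right _ _
    have h2 : min (-lamM) lamP ≤ lamP := min_le_right _ _
    have : 0 < min (-lamM) lamP := lt_min (by linarith) hlamP
    linarith
  have hδq : h δ < q := by
    apply hball
    rw [Real.dist_eq, sub_zero, abs_of_pos hδpos]
    linarith [min_le_left (ε / 2) (min (-lamM) lamP / 2)]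
  refine ⟨-δ, δ, by linarith, by linarith, hδpos, hδP, ?_⟩
  intro η hη x hx heq
  set σ : ℝ := η.im with hσ
  obtain ⟨hσ1, hσ2⟩ := hη
  -- the two shifted arguments
  set wm : ℂ := (-lamM : ℂ) - Complex.I * η with hwm
  set wp : ℂ := (lamP : ℂ) + Complex.I * η with hwp
  have hwmre : wm.re = -lamM + σ := by simp [hwm, hσ]
  have hwpre : wp.re = lamP - σ := by simp [hwp, hσ]; ring
  have hwmpos : 0 < wm.re := by rw [hwmre]; linarith
  have hwppos : 0 < wp.re := by rw [hwpre]; linarith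
  set Rm : ℝ := (wm ^ (ν : ℂ)).re with hRm
  set Rp : ℝ := (wp ^ (ν : ℂ)).re with hRp
  have hRm1 : (-lamM - δ) ^ ν ≤ Rm := by
    calc (-lamM - δ) ^ ν ≤ wm.re ^ ν := by
          apply Real.rpow_le_rpow (by linarith) _ hν0.le
          rw [hwmre]; linarith
      _ ≤ Rm := re_rpow_le_re_cpow hwmpos hν0.le hν1.le
  have hRp1 : (lamP - δ) ^ ν ≤ Rp := by
    calc (lamP - δ) ^ ν ≤ wp.re ^ ν := by
          apply Real.rpow_le_rpow (by linarith) _ hν0.le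
          rw [hwpre]; linarith
      _ ≤ Rp := re_rpow_le_re_cpow hwppos hν0.le hν1.le
  -- real part of the whole expression
  have hApow : (((-lamM : ℝ) : ℂ) ^ (ν : ℂ)) = ((A : ℝ) : ℂ) :=
    (Complex.ofReal_cpow (by linarith) ν).symm
  have hBpow : (((lamP : ℝ) : ℂ) ^ (ν : ℂ)) = ((B : ℝ) : ℂ) :=
    (Complex.ofReal_cpow (by linarith) ν).symm
  have hre : ((q : ℂ) + kobolPsi ν c lamM lamP μ η).re
      = q + μ * σ + c * Real.Gamma (-ν) * (A - Rm + B - Rp) := by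
    rw [kobolPsi, kobolPsi0, ← hwm, ← hwp, hApow, hBpow]
    simp [Complex.add_re, Complex.mul_re, Complex.mul_im, Complex.sub_re, ← hRm, ← hRp, hσ]
    ring
  have hrepos : 0 < ((q : ℂ) + kobolPsi ν c lamM lamP μ η).re := by
    rw [hre]
    have hbound : A - Rm + B - Rp ≤ (A - (-lamM - δ) ^ ν) + (B - (lamP - δ) ^ ν) := by
      linarith
    have hmul : c * Real.Gamma (-ν) * (A - Rm + B - Rp)
        ≥ -(c * G * ((A - (-lamM - δ) ^ ν) + (B - (lamP - δ) ^ ν))) := by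
      have hcG : 0 ≤ c * G := by positivity
      have := mul_le_mul_of_nonneg_left hbound hcG
      have hΓ : c * Real.Gamma (-ν) = -(c * G) := by rw [hGdef]; ring
      rw [hΓ]
      linarith
    have hμσ : -( |μ| * δ) ≤ μ * σ := by
      have h1 : |μ * σ| ≤ |μ| * δ := by
        rw [abs_mul]
        apply mul_le_mul_of_nonneg_left _ (abs_nonneg μ)
        rw [abs_le]; constructor <;> linarith
      have := neg_abs_le (μ * σ)
      linarith
    have hhδ := hδq
    rw [hh] at hhδ
    simp only at hhδ
    linarith
  have := congrArg Complex.re heq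
  rw [hre] at this
  simp only [Complex.ofReal_re] at this
  linarith [hrepos, this ▸ hx]
end

section
/- Let ω₁⁺ ≥ 0, b⁺ > 0, ω⁺ ∈ (0, π/2), ω₁⁻ ≤ 0, b⁻ > 0, ω⁻ ∈ (−π/2, 0), and consider the curves L⁺ = { iω₁⁺ + b⁺ sinh(iω⁺ + y) : y ∈ ℝ } (contained in the open upper half-plane) and L⁻ = { iω₁⁻ + b⁻ sinh(iω⁻ + y) : y ∈ ℝ } (contained in the open lower half-plane). Then there exists c > 0 such that for all η ∈ L⁺ and all ξ ∈ L⁻, Im(η − ξ) ≥ c |η|. -/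
open Complex Set
open scoped Real

lemma sinh_I_add (ω y : ℝ) :
    Complex.sinh (Complex.I * (ω : ℂ) + (y : ℂ)) =
      ((Real.cos ω * Real.sinh y : ℝ) : ℂ) + ((Real.sin ω * Real.cosh y : ℝ) : ℂ) * Complex.I := by
  rw [mul_comm Complex.I, Complex.sinh_add, Complex.sinh_mul_I, Complex.cosh_mul_I,
    ← Complex.ofReal_sin, ← Complex.ofReal_cos, ← Complex.ofReal_sinh, ← Complex.ofReal_cosh]
  push_cast
  ring

theorem sinh_curves_im_separation
    (ω1p bp ωp ω1m bm ωm : ℝ)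
    (hω1p : 0 ≤ ω1p) (hbp : 0 < bp) (hωp : ωp ∈ Set.Ioo (0 : ℝ) (π / 2))
    (hω1m : ω1m ≤ 0) (hbm : 0 < bm) (hωm : ωm ∈ Set.Ioo (-(π / 2)) (0 : ℝ)) :
    ∃ c : ℝ, 0 < c ∧ ∀ y z : ℝ,
      c * ‖Complex.I * (ω1p : ℂ) + (bp : ℂ) *
          Complex.sinh (Complex.I * (ωp : ℂ) + (y : ℂ))‖ ≤
        ((Complex.I * (ω1p : ℂ) + (bp : ℂ) * Complex.sinh (Complex.I * (ωp : ℂ) + (y : ℂ))) -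
          (Complex.I * (ω1m : ℂ) + (bm : ℂ) *
            Complex.sinh (Complex.I * (ωm : ℂ) + (z : ℂ)))).im := by
  obtain ⟨hωp1, hωp2⟩ := hωp
  obtain ⟨hωm1, hωm2⟩ := hωm
  have hs : 0 < Real.sin ωp := Real.sin_pos_of_pos_of_lt_pi hωp1 (lt_trans hωp2 (by linarith [Real.pi_pos]))
  have hs1 : Real.sin ωp ≤ 1 := Real.sin_le_one ωp
  refine ⟨Real.sin ωp, hs, fun y z => ?_⟩
  rw [sinh_I_add, sinh_I_add]
  set s := Real.sin ωp
  -- bound abs of η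
  have habs : ‖Complex.I * (ω1p : ℂ) + (bp : ℂ) *
      (((Real.cos ωp * Real.sinh y : ℝ) : ℂ) + ((s * Real.cosh y : ℝ) : ℂ) * Complex.I)‖
      ≤ ω1p + bp * Real.cosh y := by
    refine le_trans (norm_add_le _ _) ?_
    have h1 : ‖Complex.I * (ω1p : ℂ)‖ = ω1p := by
      rw [norm_mul, Complex.norm_I, Complex.norm_real, one_mul, Real.norm_of_nonneg hω1p]
    have hc : 0 ≤ Real.cosh y := (Real.cosh_pos y).le
    have h2 : ‖((Real.cos ωp * Real.sinh y : ℝ) : ℂ) +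
        ((s * Real.cosh y : ℝ) : ℂ) * Complex.I‖ ≤ Real.cosh y := by
      have hsin2 : Real.sin ωp ^ 2 + Real.cos ωp ^ 2 = 1 := Real.sin_sq_add_cos_sq ωp
      have hsh : Real.sinh y ^ 2 ≤ Real.cosh y ^ 2 := by
        nlinarith [Real.cosh_sq y, Real.sinh_sq y]
      have hle : Complex.normSq (((Real.cos ωp * Real.sinh y : ℝ) : ℂ) +
          ((s * Real.cosh y : ℝ) : ℂ) * Complex.I) ≤ (Real.cosh y)^2 := by
        simp only [Complex.normSq_apply, Complex.add_re, Complex.add_im, Complex.ofReal_re,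
          Complex.ofReal_im, Complex.mul_re, Complex.mul_im, Complex.I_re, Complex.I_im]
        nlinarith [sq_nonneg (Real.cos ωp), sq_nonneg (Real.sin ωp)]
      calc ‖_‖ = Real.sqrt (Complex.normSq _) := by rw [Complex.norm_def]
        _ ≤ Real.sqrt ((Real.cosh y)^2) := Real.sqrt_le_sqrt hle
        _ = Real.cosh y := Real.sqrt_sq hc
    calc ‖Complex.I * (ω1p : ℂ)‖ + ‖(bp : ℂ) *
          (((Real.cos ωp * Real.sinh y : ℝ) : ℂ) + ((s * Real.cosh y : ℝ) : ℂ) * Complex.I)‖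
        = ω1p + bp * ‖((Real.cos ωp * Real.sinh y : ℝ) : ℂ) +
          ((s * Real.cosh y : ℝ) : ℂ) * Complex.I‖ := by
          rw [h1, norm_mul, Complex.norm_real, Real.norm_of_nonneg hbp.le]
      _ ≤ ω1p + bp * Real.cosh y := by nlinarith
  -- compute the imaginary part
  have him : ((Complex.I * (ω1p : ℂ) + (bp : ℂ) *
      (((Real.cos ωp * Real.sinh y : ℝ) : ℂ) + ((s * Real.cosh y : ℝ) : ℂ) * Complex.I)) -
      (Complex.I * (ω1m : ℂ) + (bm : ℂ) *
      (((Real.cos ωm * Real.sinh z : ℝ) : ℂ) + ((Real.sin ωm * Real.cosh z : ℝ) : ℂ) * Complex.I))).im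
      = (ω1p + bp * (s * Real.cosh y)) - (ω1m + bm * (Real.sin ωm * Real.cosh z)) := by
    simp only [Complex.sub_im, Complex.add_im, Complex.mul_im, Complex.mul_re,
      Complex.I_re, Complex.I_im, Complex.ofReal_re, Complex.ofReal_im]
    ring
  rw [him]
  have hsm : Real.sin ωm < 0 := Real.sin_neg_of_neg_of_neg_pi_lt hωm2 (by linarith [Real.pi_pos])
  have hcz : 0 < Real.cosh z := Real.cosh_pos z
  have hξ : ω1m + bm * (Real.sin ωm * Real.cosh z) ≤ 0 := by
    nlinarith [mul_pos hbm (mul_pos (neg_pos.mpr hsm) hcz)]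
  have hcy : 0 < Real.cosh y := Real.cosh_pos y
  have : s * (ω1p + bp * Real.cosh y) ≤ ω1p + bp * (s * Real.cosh y) := by nlinarith
  nlinarith [mul_le_mul_of_nonneg_left habs hs.le]
end

section
/- Let ω > 0, let g : ℝ → ℂ be such that t ↦ g(t + iω) is Lebesgue integrable on ℝ, let h ∈ ℝ, and define w(y) = (1/2π) ∫_ℝ e^{iy(t+iω)} g(t + iω) dt for y ∈ ℝ. Then for every ξ ∈ ℂ with Im ξ < ω, the integral ∫_h^∞ e^{−iyξ} w(y) dy converges absolutely and equals −(1/(2πi)) ∫_ℝ e^{ih(t+iω−ξ)} · g(t + iω) / (t + iω − ξ) dt. -/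
set_option maxHeartbeats 1000000
open MeasureTheory Complex Set
open scoped Real

theorem fourier_projection_upper_halfline
    (ω : ℝ) (hω : 0 < ω) (g : ℂ → ℂ)
    (hg : Integrable (fun t : ℝ => g ((t : ℂ) + Complex.I * (ω : ℂ))))
    (h : ℝ)
    (w : ℝ → ℂ)
    (hw : ∀ y : ℝ, w y = (1 / (2 * (π : ℂ))) *
      ∫ t : ℝ, Complex.exp (Complex.I * (y : ℂ) * ((t : ℂ) + Complex.I * (ω : ℂ))) *
        g ((t : ℂ) + Complex.I * (ω : ℂ))) :
    ∀ ξ : ℂ, ξ.im < ω →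
      IntegrableOn (fun y : ℝ => Complex.exp (-Complex.I * (y : ℂ) * ξ) * w y)
        (Set.Ioi h) ∧
      (∫ y in Set.Ioi h, Complex.exp (-Complex.I * (y : ℂ) * ξ) * w y) =
        -(1 / (2 * (π : ℂ) * Complex.I)) *
          ∫ t : ℝ, Complex.exp (Complex.I * (h : ℂ) * ((t : ℂ) + Complex.I * (ω : ℂ) - ξ)) *
            g ((t : ℂ) + Complex.I * (ω : ℂ)) / ((t : ℂ) + Complex.I * (ω : ℂ) - ξ) := by
  intro ξ hξ
  set δ : ℝ := ω - ξ.im with hδdef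
  have hδ : 0 < δ := by rw [hδdef]; linarith
  set η : ℝ → ℂ := fun t => (t : ℂ) + Complex.I * ω - ξ with hη
  have hηim : ∀ t : ℝ, (η t).im = δ := by intro t; simp [hη, hδdef]
  have hηne : ∀ t : ℝ, η t ≠ 0 := by
    intro t hzero
    have h2 := hηim t
    rw [hzero] at h2
    simp at h2
    linarith
  have hnorm : ∀ (y t : ℝ), ‖Complex.exp (Complex.I * y * η t)‖ = Real.exp (-(δ * y)) := by
    intro y t
    rw [Complex.norm_exp]
    congr 1
    have : (Complex.I * y * η t).re = -(y * (η t).im) := by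
      simp [Complex.mul_re, Complex.mul_im]
    rw [this, hηim]; ring
  set F : ℝ → ℝ → ℂ := fun y t =>
    Complex.exp (Complex.I * y * η t) * g ((t : ℂ) + Complex.I * ω) with hF
  have key : ∀ y : ℝ, Complex.exp (-Complex.I * y * ξ) * w y
      = (1 / (2 * (π : ℂ))) * ∫ t : ℝ, F y t := by
    intro y
    rw [hw y, mul_left_comm]
    congr 1
    rw [← integral_const_mul]
    congr 1
    funext t
    rw [← mul_assoc, ← Complex.exp_add]
    congr 2
    simp only [hη]
    ring
  have hFint : Integrable (Function.uncurry F)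
      ((volume.restrict (Set.Ioi h)).prod volume) := by
    have hmeas : AEStronglyMeasurable (Function.uncurry F)
        ((volume.restrict (Set.Ioi h)).prod volume) := by
      apply AEStronglyMeasurable.mul
      · refine Continuous.aestronglyMeasurable ?_
        apply Complex.continuous_exp.comp
        simp only [hη]
        fun_prop
      · exact hg.1.comp_snd
    have hbound : Integrable (fun p : ℝ × ℝ =>
        Real.exp (-δ * p.1) * ‖g ((p.2 : ℂ) + Complex.I * ω)‖)
        ((volume.restrict (Set.Ioi h)).prod volume) :=
      (exp_neg_integrableOn_Ioi h hδ).mul_prod hg.norm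
    refine hbound.mono' hmeas ?_
    filter_upwards with p
    rw [Function.uncurry]
    simp only [hF]
    rw [norm_mul, hnorm, neg_mul]
  have hIntOuter : Integrable (fun y => ∫ t : ℝ, F y t) (volume.restrict (Set.Ioi h)) :=
    hFint.integral_prod_left
  constructor
  · exact ((hIntOuter.const_mul (1 / (2 * (π : ℂ)))).congr
      (Filter.Eventually.of_forall fun y => (key y).symm))
  · -- inner integral computation
    have inner : ∀ t : ℝ, (∫ y in Set.Ioi h, Complex.exp (Complex.I * y * η t))
        = -(Complex.exp (Complex.I * h * η t) / (Complex.I * η t)) := by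
      intro t
      set c : ℂ := Complex.I * η t with hc
      have hcne : c ≠ 0 := mul_ne_zero Complex.I_ne_zero (hηne t)
      have hderiv : ∀ y : ℝ, y ∈ Set.Ici h →
          HasDerivAt (fun y' : ℝ => Complex.exp (c * y') / c) (Complex.exp (Complex.I * y * η t)) y := by
        intro y _
        have h1 : HasDerivAt (fun y' : ℝ => (c * (y' : ℂ))) c y := by
          simpa using (Complex.ofRealCLM.hasDerivAt (x := y)).const_mul c
        have h2 := (Complex.hasDerivAt_exp (c * y)).comp y h1
        have h3 := h2.div_const c
        have : Complex.exp (c * y) * c / c = Complex.exp (Complex.I * y * η t) := by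
          rw [mul_div_assoc, div_self hcne, mul_one, hc]; ring_nf
        rwa [this] at h3
      have hint : IntegrableOn (fun y : ℝ => Complex.exp (Complex.I * y * η t))
          (Set.Ioi h) := by
        refine ((exp_neg_integrableOn_Ioi h hδ).mono' ?_ ?_)
        · exact (Complex.continuous_exp.comp (by fun_prop : Continuous fun y : ℝ =>
            Complex.I * (y : ℂ) * η t)).aestronglyMeasurable
        · filter_upwards with y
          rw [hnorm, neg_mul]
      have htend : Filter.Tendsto (fun y : ℝ => Complex.exp (c * y) / c)
          Filter.atTop (nhds 0) := by
        rw [tendsto_zero_iff_norm_tendsto_zero]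
        have heq : ∀ y : ℝ, ‖Complex.exp (c * y) / c‖ = Real.exp (-(δ * y)) / ‖c‖ := by
          intro y
          rw [norm_div]
          congr 1
          have : c * y = Complex.I * y * η t := by rw [hc]; ring
          rw [this, hnorm]
        simp only [heq]
        have : Filter.Tendsto (fun y : ℝ => Real.exp (-(δ * y))) Filter.atTop (nhds 0) := by
          apply Real.tendsto_exp_atBot.comp
          exact Filter.tendsto_neg_atBot_iff.mpr (Filter.Tendsto.const_mul_atTop hδ Filter.tendsto_id)
        simpa using this.div_const ‖c‖
      have := integral_Ioi_of_hasDerivAt_of_tendsto' hderiv hint htend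
      rw [this, zero_sub, hc]
      ring_nf
    calc (∫ y in Set.Ioi h, Complex.exp (-Complex.I * y * ξ) * w y)
        = ∫ y in Set.Ioi h, (1 / (2 * (π : ℂ))) * ∫ t : ℝ, F y t := by
          exact integral_congr_ae (Filter.Eventually.of_forall fun y => key y)
      _ = (1 / (2 * (π : ℂ))) * ∫ y in Set.Ioi h, ∫ t : ℝ, F y t := integral_const_mul _ _
      _ = (1 / (2 * (π : ℂ))) * ∫ t : ℝ, ∫ y in Set.Ioi h, F y t := by
          rw [integral_integral_swap hFint]
      _ = (1 / (2 * (π : ℂ))) * ∫ t : ℝ,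
            Complex.I * (Complex.exp (Complex.I * h * η t) *
              g ((t : ℂ) + Complex.I * ω) / η t) := by
          congr 1
          apply integral_congr_ae
          filter_upwards with t
          simp only [hF]
          rw [integral_mul_const, inner t]
          have h2 : (Complex.I * η t)⁻¹ = -Complex.I * (η t)⁻¹ := by
            rw [mul_inv, Complex.inv_I]
          rw [div_eq_mul_inv, h2, div_eq_mul_inv]
          ring
      _ = -(1 / (2 * (π : ℂ) * Complex.I)) *
          ∫ t : ℝ, Complex.exp (Complex.I * h * ((t:ℂ) + Complex.I * ω - ξ)) *
            g ((t : ℂ) + Complex.I * ω) / ((t:ℂ) + Complex.I * ω - ξ) := by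
          have hconst : -(1 / (2 * (π : ℂ) * Complex.I)) = (1 / (2 * (π : ℂ))) * Complex.I := by
            rw [one_div, one_div, mul_inv, Complex.inv_I]; ring
          rw [integral_const_mul, hconst, mul_assoc]
end

section
/- Let ω < 0, let g : ℝ → ℂ be such that t ↦ g(t + iω) is Lebesgue integrable on ℝ, let h ∈ ℝ, and define w(y) = (1/2π) ∫_ℝ e^{iy(t+iω)} g(t + iω) dt for y ∈ ℝ. Then for every ξ ∈ ℂ with Im ξ > ω, the integral ∫_{−∞}^h e^{−iyξ} w(y) dy converges absolutely and equals (1/(2πi)) ∫_ℝ e^{ih(t+iω−ξ)} · g(t + iω) / (t + iω − ξ) dt. -/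
open MeasureTheory Complex Set
open scoped Real

lemma exp_mul_integrableOn_Iic_aux {a : ℝ} (ha : 0 < a) (h : ℝ) :
    IntegrableOn (fun y : ℝ => Real.exp (a * y)) (Set.Iic h) := by
  rw [IntegrableOn]
  rw [show (Integrable (fun y : ℝ => Real.exp (a * y)) (volume.restrict (Set.Iic h))) ↔
      Integrable ((Set.Iic h).indicator fun y : ℝ => Real.exp (a * y)) volume from
    (integrable_indicator_iff measurableSet_Iic).symm]
  have heq : (Set.Iic h).indicator (fun y : ℝ => Real.exp (a * y))
      = fun y : ℝ => (Set.Iic (a * h)).indicator Real.exp (a * y) := by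
    ext y
    by_cases hy : y ≤ h
    · rw [indicator_of_mem (Set.mem_Iic.mpr hy),
        indicator_of_mem (Set.mem_Iic.mpr (mul_le_mul_of_nonneg_left hy ha.le))]
    · rw [indicator_of_notMem (fun hm => hy (Set.mem_Iic.mp hm)),
        indicator_of_notMem
          (fun hm => hy (le_of_mul_le_mul_left (Set.mem_Iic.mp hm) ha))]
  rw [heq]
  exact (integrable_comp_mul_left_iff ((Set.Iic (a * h)).indicator Real.exp) ha.ne').2
    ((integrable_indicator_iff measurableSet_Iic).2 (integrableOn_exp_Iic (a * h)))

lemma cexp_norm_aux (c : ℂ) (y : ℝ) :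
    ‖Complex.exp (c * (y : ℂ))‖ = Real.exp (c.re * y) := by
  rw [Complex.norm_exp]
  congr 1
  simp [Complex.mul_re]

lemma cexp_integrableOn_Iic_aux {c : ℂ} (hc : 0 < c.re) (h : ℝ) :
    IntegrableOn (fun y : ℝ => Complex.exp (c * (y : ℂ))) (Set.Iic h) := by
  apply Integrable.mono' (exp_mul_integrableOn_Iic_aux hc h)
  · exact (Complex.continuous_exp.comp
      (continuous_const.mul Complex.continuous_ofReal)).aestronglyMeasurable
  · filter_upwards with y
    rw [cexp_norm_aux]

lemma cexp_integral_Iic_aux {c : ℂ} (hc : 0 < c.re) (h : ℝ) :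
    (∫ y in Set.Iic h, Complex.exp (c * (y : ℂ))) = Complex.exp (c * (h : ℂ)) / c := by
  have hc0 : c ≠ 0 := fun h0 => by simp [h0] at hc
  have hderiv : ∀ x : ℝ, x ∈ Set.Iic h →
      HasDerivAt (fun y : ℝ => Complex.exp (c * (y : ℂ)) / c)
        (Complex.exp (c * (x : ℂ))) x := by
    intro x _
    have h1 : HasDerivAt (fun z : ℂ => Complex.exp (c * z) / c)
        (Complex.exp (c * (x : ℂ))) (x : ℂ) := by
      have h0 : HasDerivAt (fun z : ℂ => c * z) c (x : ℂ) := by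
        simpa using (hasDerivAt_id (x : ℂ)).const_mul c
      have h2 : HasDerivAt (fun z : ℂ => Complex.exp (c * z))
          (Complex.exp (c * (x : ℂ)) * c) (x : ℂ) := h0.cexp
      have h3 := h2.div_const c
      rwa [mul_div_cancel_right₀ _ hc0] at h3
    exact h1.comp_ofReal
  have htend : Filter.Tendsto (fun y : ℝ => Complex.exp (c * (y : ℂ)) / c)
      Filter.atBot (nhds 0) := by
    rw [tendsto_zero_iff_norm_tendsto_zero]
    have : ∀ y : ℝ, ‖Complex.exp (c * (y : ℂ)) / c‖ = Real.exp (c.re * y) / ‖c‖ := by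
      intro y; rw [norm_div, cexp_norm_aux]
    simp only [this]
    have h4 : Filter.Tendsto (fun y : ℝ => c.re * y) Filter.atBot Filter.atBot :=
      Filter.Tendsto.const_mul_atBot hc Filter.tendsto_id
    simpa using (Real.tendsto_exp_atBot.comp h4).div_const ‖c‖
  have := integral_Iic_of_hasDerivAt_of_tendsto' hderiv
    (cexp_integrableOn_Iic_aux hc h) htend
  simpa using this

theorem fourier_projection_lower_halfline
    (ω : ℝ) (hω : ω < 0) (g : ℂ → ℂ)
    (hg : Integrable (fun t : ℝ => g ((t : ℂ) + Complex.I * (ω : ℂ))))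
    (h : ℝ)
    (w : ℝ → ℂ)
    (hw : ∀ y : ℝ, w y = (1 / (2 * (π : ℂ))) *
      ∫ t : ℝ, Complex.exp (Complex.I * (y : ℂ) * ((t : ℂ) + Complex.I * (ω : ℂ))) *
        g ((t : ℂ) + Complex.I * (ω : ℂ))) :
    ∀ ξ : ℂ, ω < ξ.im →
      IntegrableOn (fun y : ℝ => Complex.exp (-Complex.I * (y : ℂ) * ξ) * w y)
        (Set.Iic h) ∧
      (∫ y in Set.Iic h, Complex.exp (-Complex.I * (y : ℂ) * ξ) * w y) =
        (1 / (2 * (π : ℂ) * Complex.I)) *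
          ∫ t : ℝ, Complex.exp (Complex.I * (h : ℂ) * ((t : ℂ) + Complex.I * (ω : ℂ) - ξ)) *
            g ((t : ℂ) + Complex.I * (ω : ℂ)) / ((t : ℂ) + Complex.I * (ω : ℂ) - ξ) := by
  intro ξ hξ
  set z : ℝ → ℂ := fun t => (t : ℂ) + Complex.I * (ω : ℂ) with hz
  set c : ℝ → ℂ := fun t => Complex.I * (z t - ξ) with hcdef
  have ha : 0 < ξ.im - ω := sub_pos.2 hξ
  have hzim : ∀ t : ℝ, (z t - ξ).im = ω - ξ.im := by
    intro t; simp [hz]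
  have hcre : ∀ t : ℝ, (c t).re = ξ.im - ω := by
    intro t
    simp [hcdef, Complex.mul_re, hzim t]
  have hcne : ∀ t : ℝ, c t ≠ 0 := by
    intro t h0
    have := hcre t
    rw [h0] at this
    simp only [Complex.zero_re] at this
    linarith
  have hzne : ∀ t : ℝ, z t - ξ ≠ 0 := by
    intro t h0
    have := hzim t
    rw [h0] at this
    simp only [Complex.zero_im] at this
    linarith
  -- the two-variable function
  set F : ℝ × ℝ → ℂ := fun p => Complex.exp (c p.2 * (p.1 : ℂ)) * g (z p.2) with hF
  have hFnorm : ∀ p : ℝ × ℝ, ‖F p‖ = Real.exp ((ξ.im - ω) * p.1) * ‖g (z p.2)‖ := by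
    intro p
    rw [hF, norm_mul, cexp_norm_aux, hcre]
  have hFmeas : AEStronglyMeasurable F ((volume.restrict (Set.Iic h)).prod volume) := by
    apply AEStronglyMeasurable.mul
    · apply Continuous.aestronglyMeasurable
      apply Complex.continuous_exp.comp
      apply Continuous.mul
      · apply continuous_const.mul
        exact ((Complex.continuous_ofReal.comp continuous_snd).add continuous_const).sub
          continuous_const
      · exact Complex.continuous_ofReal.comp continuous_fst
    · exact hg.aestronglyMeasurable.comp_snd
  have hFint : Integrable F ((volume.restrict (Set.Iic h)).prod volume) := by
    apply Integrable.mono'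
      ((exp_mul_integrableOn_Iic_aux ha h).mul_prod hg.norm) hFmeas
    filter_upwards with p
    rw [hFnorm]
  -- pointwise identity for the integrand in y
  have hpt : ∀ y : ℝ, Complex.exp (-Complex.I * (y : ℂ) * ξ) * w y
      = (1 / (2 * (π : ℂ))) * ∫ t : ℝ, F (y, t) := by
    intro y
    rw [hw y, ← mul_assoc, mul_comm (Complex.exp (-Complex.I * (y : ℂ) * ξ))
      (1 / (2 * (π : ℂ))), mul_assoc, ← integral_const_mul]
    congr 1
    refine integral_congr_ae (Filter.Eventually.of_forall fun t => ?_)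
    rw [hF]
    simp only
    rw [← mul_assoc, ← Complex.exp_add]
    congr 2
    simp only [hcdef, hz]
    ring
  have hIntegral : IntegrableOn (fun y : ℝ => Complex.exp (-Complex.I * (y : ℂ) * ξ) * w y)
      (Set.Iic h) := by
    have h1 : Integrable (fun y : ℝ => ∫ t : ℝ, F (y, t))
        (volume.restrict (Set.Iic h)) := hFint.integral_prod_left
    have h2 := h1.const_mul (1 / (2 * (π : ℂ)))
    exact h2.congr (Filter.Eventually.of_forall fun y => (hpt y).symm)
  refine ⟨hIntegral, ?_⟩
  have hπ : (π : ℂ) ≠ 0 := Complex.ofReal_ne_zero.2 Real.pi_ne_zero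
  calc (∫ y in Set.Iic h, Complex.exp (-Complex.I * (y : ℂ) * ξ) * w y)
      = ∫ y in Set.Iic h, (1 / (2 * (π : ℂ))) * ∫ t : ℝ, F (y, t) := by
        exact integral_congr_ae (Filter.Eventually.of_forall fun y => hpt y)
    _ = (1 / (2 * (π : ℂ))) * ∫ y in Set.Iic h, ∫ t : ℝ, F (y, t) := by
        rw [integral_const_mul]
    _ = (1 / (2 * (π : ℂ))) * ∫ t : ℝ, ∫ y in Set.Iic h, F (y, t) := by
        rw [integral_integral_swap hFint]
    _ = (1 / (2 * (π : ℂ))) * ∫ t : ℝ,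
          (Complex.exp (c t * (h : ℂ)) / c t) * g (z t) := by
        congr 1
        refine integral_congr_ae (Filter.Eventually.of_forall fun t => ?_)
        rw [hF]
        simp only
        rw [integral_mul_const, cexp_integral_Iic_aux (by rw [hcre t]; exact ha) h]
    _ = (1 / (2 * (π : ℂ) * Complex.I)) *
          ∫ t : ℝ, Complex.exp (Complex.I * (h : ℂ) * (z t - ξ)) *
            g (z t) / (z t - ξ) := by
        have heq : ∀ t : ℝ, (Complex.exp (c t * (h : ℂ)) / c t) * g (z t)
            = (Complex.exp (Complex.I * (h : ℂ) * (z t - ξ)) * g (z t) / (z t - ξ)) / Complex.I := by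
          intro t
          have harg : c t * (h : ℂ) = Complex.I * (h : ℂ) * (z t - ξ) := by
            rw [hcdef]; ring
          rw [harg, hcdef]
          field_simp
        rw [integral_congr_ae (Filter.Eventually.of_forall heq), integral_div]
        ring
end

section
/- Let (Ω, F, ℙ) be a probability space, M : Ω → ℝ a random variable with M ≥ 0 almost surely, h ∈ ℝ, and ξ ∈ ℂ with Im ξ < 0 such that E[e^{(−Im ξ) M}] < ∞. Then the function x ↦ e^{−ixξ} ℙ(x + M ≥ h) is Lebesgue integrable on ℝ and ∫_ℝ e^{−ixξ} ℙ(x + M ≥ h) dx = e^{−ihξ} E[e^{iξM}] / (iξ). -/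
open MeasureTheory Complex Set Filter
open scoped ENNReal Topology

lemma aux_norm_cexp (ξ : ℂ) (x : ℝ) :
    ‖Complex.exp (-Complex.I * x * ξ)‖ = Real.exp (ξ.im * x) := by
  rw [Complex.norm_exp]
  congr 1
  simp [Complex.mul_re, Complex.mul_im]
  ring

lemma aux_tendsto_exp_mul {b : ℝ} (hb : b < 0) :
    Tendsto (fun x : ℝ => Real.exp (b * x)) atTop (𝓝 0) :=
  Real.tendsto_exp_atBot.comp ((tendsto_const_mul_atBot_of_neg hb).mpr tendsto_id)

lemma aux_integrableOn_exp_mul_Ici {b : ℝ} (hb : b < 0) (a : ℝ) :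
    IntegrableOn (fun x : ℝ => Real.exp (b * x)) (Ici a) := by
  rw [integrableOn_Ici_iff_integrableOn_Ioi]
  have := exp_neg_integrableOn_Ioi a (neg_pos.mpr hb)
  simpa using this

lemma aux_integral_exp_mul_Ici {b : ℝ} (hb : b < 0) (a : ℝ) :
    ∫ x in Ici a, Real.exp (b * x) = Real.exp (b * a) / (-b) := by
  rw [MeasureTheory.integral_Ici_eq_integral_Ioi]
  have hd : ∀ x ∈ Ici a, HasDerivAt (fun x : ℝ => Real.exp (b * x) / b)
      (Real.exp (b * x)) x := by
    intro x _
    have h1 : HasDerivAt (fun x : ℝ => b * x) b x := by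
      simpa using (hasDerivAt_id x).const_mul b
    have h2 := (h1.exp).div_const b
    rwa [mul_div_cancel_right₀ _ hb.ne] at h2
  have ht : Tendsto (fun x : ℝ => Real.exp (b * x) / b) atTop (𝓝 0) := by
    simpa using (aux_tendsto_exp_mul hb).div_const b
  rw [integral_Ioi_of_hasDerivAt_of_tendsto' hd
    (((aux_integrableOn_exp_mul_Ici hb a)).mono_set Ioi_subset_Ici_self) ht, zero_sub,
    div_neg]

lemma aux_cont (ξ : ℂ) : Continuous (fun x : ℝ => -Complex.I * x * ξ) :=
  (continuous_const.mul Complex.continuous_ofReal).mul continuous_const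

lemma aux_integrableOn_cexp {ξ : ℂ} (hξ : ξ.im < 0) (a : ℝ) :
    IntegrableOn (fun x : ℝ => Complex.exp (-Complex.I * x * ξ)) (Ici a) := by
  refine (aux_integrableOn_exp_mul_Ici hξ a).mono' ?_ ?_
  · exact (Complex.continuous_exp.comp (aux_cont ξ)).aestronglyMeasurable
  · exact Eventually.of_forall fun x => le_of_eq (aux_norm_cexp ξ x)

lemma aux_integral_cexp {ξ : ℂ} (hξ : ξ.im < 0) (a : ℝ) :
    ∫ x in Ici a, Complex.exp (-Complex.I * x * ξ)
      = Complex.exp (-Complex.I * a * ξ) / (Complex.I * ξ) := by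
  have hξ0 : ξ ≠ 0 := fun h0 => by simp [h0] at hξ
  have hc : (-Complex.I * ξ) ≠ 0 :=
    mul_ne_zero (neg_ne_zero.mpr Complex.I_ne_zero) hξ0
  rw [MeasureTheory.integral_Ici_eq_integral_Ioi]
  have hd : ∀ x ∈ Ici a, HasDerivAt
      (fun x : ℝ => Complex.exp (-Complex.I * x * ξ) / (-Complex.I * ξ))
      (Complex.exp (-Complex.I * x * ξ)) x := by
    intro x _
    have h0 := (Complex.ofRealCLM.hasDerivAt (x := x)).const_mul (-Complex.I * ξ)
    simp only [Complex.ofRealCLM_apply, Complex.ofReal_one, mul_one] at h0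
    have heq : (fun y : ℝ => -Complex.I * ξ * (y : ℂ)) =
        fun y : ℝ => -Complex.I * (y : ℂ) * ξ := by funext y; ring
    rw [heq] at h0
    have h2 := (h0.cexp).div_const (-Complex.I * ξ)
    rwa [mul_div_cancel_right₀ _ hc] at h2
  have ht : Tendsto (fun x : ℝ => Complex.exp (-Complex.I * x * ξ) / (-Complex.I * ξ))
      atTop (𝓝 0) := by
    rw [tendsto_zero_iff_norm_tendsto_zero]
    have heq : (fun x : ℝ => ‖Complex.exp (-Complex.I * x * ξ) / (-Complex.I * ξ)‖)
        = fun x : ℝ => Real.exp (ξ.im * x) / ‖-Complex.I * ξ‖ := by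
      funext x; rw [norm_div, aux_norm_cexp]
    rw [heq]
    simpa using (aux_tendsto_exp_mul hξ).div_const ‖-Complex.I * ξ‖
  rw [integral_Ioi_of_hasDerivAt_of_tendsto' hd
    ((aux_integrableOn_cexp hξ a).mono_set Ioi_subset_Ici_self) ht, zero_sub]
  rw [show -Complex.I * ξ = -(Complex.I * ξ) by ring, div_neg, neg_neg]

theorem fourier_transform_of_halfline_probability
    {Ω : Type*} [MeasurableSpace Ω] (P : Measure Ω) [IsProbabilityMeasure P]
    (M : Ω → ℝ) (hMmeas : Measurable M) (hMpos : ∀ᵐ ω ∂P, 0 ≤ M ω)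
    (h : ℝ) (ξ : ℂ) (hξ : ξ.im < 0)
    (hexp : Integrable (fun ω => Real.exp (-ξ.im * M ω)) P) :
    Integrable (fun x : ℝ => Complex.exp (-Complex.I * (x : ℂ) * ξ) *
        ((P {ω | h ≤ x + M ω}).toReal : ℂ)) ∧
    (∫ x : ℝ, Complex.exp (-Complex.I * (x : ℂ) * ξ) *
        ((P {ω | h ≤ x + M ω}).toReal : ℂ)) =
      Complex.exp (-Complex.I * (h : ℂ) * ξ) *
        (∫ ω, Complex.exp (Complex.I * ξ * (M ω : ℂ)) ∂P) / (Complex.I * ξ) := by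
  have hSm : MeasurableSet {p : ℝ × Ω | h ≤ p.1 + M p.2} :=
    measurableSet_le measurable_const (measurable_fst.add (hMmeas.comp measurable_snd))
  set f : ℝ × Ω → ℂ :=
    ({p : ℝ × Ω | h ≤ p.1 + M p.2}).indicator
      (fun p => Complex.exp (-Complex.I * p.1 * ξ)) with hf
  have hfm : AEStronglyMeasurable f ((volume : Measure ℝ).prod P) := by
    refine (Measurable.indicator ?_ hSm).aestronglyMeasurable
    exact (Complex.continuous_exp.comp (aux_cont ξ)).measurable.comp measurable_fst
  have hsec : ∀ ω, (fun x => f (x, ω)) =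
      (Ici (h - M ω)).indicator (fun x : ℝ => Complex.exp (-Complex.I * x * ξ)) := by
    intro ω
    funext x
    rw [hf]
    by_cases hx : h - M ω ≤ x
    · rw [Set.indicator_of_mem (show x ∈ Ici (h - M ω) from hx),
        Set.indicator_of_mem (show (x, ω) ∈ {p : ℝ × Ω | h ≤ p.1 + M p.2} from by
          simp only [Set.mem_setOf_eq]; linarith)]
    · rw [Set.indicator_of_notMem (show x ∉ Ici (h - M ω) from hx),
        Set.indicator_of_notMem (show (x, ω) ∉ {p : ℝ × Ω | h ≤ p.1 + M p.2} from by
          simp only [Set.mem_setOf_eq]; intro hh; exact hx (by linarith))]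
  have hfi : Integrable f ((volume : Measure ℝ).prod P) := by
    rw [integrable_prod_iff' hfm]
    constructor
    · refine Eventually.of_forall fun ω => ?_
      rw [hsec ω, integrable_indicator_iff measurableSet_Ici]
      exact aux_integrableOn_cexp hξ _
    · have hval : ∀ ω, (∫ x, ‖f (x, ω)‖) = Real.exp (ξ.im * (h - M ω)) / (-ξ.im) := by
        intro ω
        have hnorm : (fun x => ‖f (x, ω)‖) =
            (Ici (h - M ω)).indicator fun x => Real.exp (ξ.im * x) := by
          funext x
          rw [congrFun (hsec ω) x, norm_indicator_eq_indicator_norm]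
          by_cases hx : x ∈ Ici (h - M ω)
          · rw [Set.indicator_of_mem hx, Set.indicator_of_mem hx, aux_norm_cexp]
          · rw [Set.indicator_of_notMem hx, Set.indicator_of_notMem hx]
        rw [hnorm, integral_indicator measurableSet_Ici, aux_integral_exp_mul_Ici hξ]
      have heq : (fun ω => ∫ x, ‖f (x, ω)‖)
          = fun ω => (Real.exp (ξ.im * h) / (-ξ.im)) * Real.exp (-ξ.im * M ω) := by
        funext ω
        rw [hval ω, show ξ.im * (h - M ω) = ξ.im * h + -ξ.im * M ω by ring, Real.exp_add]
        ring
      rw [heq]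
      exact hexp.const_mul _
  have hsecω : ∀ x : ℝ, (fun ω => f (x, ω))
      = ({ω | h ≤ x + M ω}).indicator (fun _ => Complex.exp (-Complex.I * x * ξ)) := by
    intro x; funext ω
    rw [hf]
    by_cases hx : h ≤ x + M ω
    · rw [Set.indicator_of_mem (show ω ∈ {ω | h ≤ x + M ω} from hx),
        Set.indicator_of_mem (show (x, ω) ∈ {p : ℝ × Ω | h ≤ p.1 + M p.2} from hx)]
    · rw [Set.indicator_of_notMem (show ω ∉ {ω | h ≤ x + M ω} from hx),
        Set.indicator_of_notMem (show (x, ω) ∉ {p : ℝ × Ω | h ≤ p.1 + M p.2} from hx)]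
  have hL : (fun x : ℝ => Complex.exp (-Complex.I * (x : ℂ) * ξ) *
      ((P {ω | h ≤ x + M ω}).toReal : ℂ)) = fun x => ∫ ω, f (x, ω) ∂P := by
    funext x
    have hs : MeasurableSet {ω | h ≤ x + M ω} :=
      measurableSet_le measurable_const (measurable_const.add hMmeas)
    rw [hsecω x, integral_indicator_const _ hs, Complex.real_smul, measureReal_def]; ring
  constructor
  · rw [hL]; exact hfi.integral_prod_left
  · rw [hL]
    rw [MeasureTheory.integral_integral_swap (by exact hfi)]
    have hinner : ∀ ω, (∫ x, f (x, ω)) =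
        (Complex.exp (-Complex.I * h * ξ) / (Complex.I * ξ)) *
          Complex.exp (Complex.I * ξ * (M ω : ℂ)) := by
      intro ω
      rw [hsec ω, integral_indicator measurableSet_Ici, aux_integral_cexp hξ]
      rw [show (-Complex.I * ((h - M ω : ℝ) : ℂ) * ξ)
          = (-Complex.I * h * ξ) + (Complex.I * ξ * (M ω : ℂ)) by push_cast; ring,
        Complex.exp_add]
      ring
    simp_rw [hinner]
    rw [MeasureTheory.integral_const_mul]
    ring
end
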